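/- arXiv:1708.09243 — 4 statements merged into one kernel-verified Lean document; each statement's English description precedes it below -/
import Mathlib

section
/- Let H be a fixed graph with at least one edge and let a, b > 0 with a + b = 1 and b > a(|H|−1); set ε := b − a(|H|−1). There is a constant c = c(H, ε) > 0 such that the following holds. For n ∈ ℕ divisible by |H|, let G_n be the complete bipartite graph on vertex set [n] with parts of sizes an and bn. If p ≤ c·(bn)^{-1/d*(H)}, then asymptotically almost surely G_n ∪ G_{n,p} does not contain a perfect H-tiling. -/
open MeasureTheory Filter

noncomputable def bernoulliMeasure (p : ℝ) : Measure Bool :=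
  (PMF.bernoulli (min (Real.toNNReal p) 1) (min_le_right _ _)).toMeasure

noncomputable def erMeasure (n : ℕ) (p : ℝ) : Measure (Sym2 (Fin n) → Bool) :=
  Measure.pi fun _ => bernoulliMeasure p

/-- The random graph on `Fin n` determined by the edge-indicator function `ω`. -/
def graphOfFn {n : ℕ} (ω : Sym2 (Fin n) → Bool) : SimpleGraph (Fin n) where
  Adj u v := u ≠ v ∧ ω s(u, v) = true
  symm := ⟨fun u v h => ⟨h.1.symm, by rw [Sym2.eq_swap]; exact h.2⟩⟩
  loopless := ⟨fun u h => h.1 rfl⟩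

/-- `f` is a copy of `H` in `G` (not necessarily induced). -/
def IsCopyEmb {α β : Type*} (H : SimpleGraph α) (G : SimpleGraph β) (f : α ↪ β) : Prop :=
  ∀ ⦃u v : α⦄, H.Adj u v → G.Adj (f u) (f v)

/-- `F` is an `H`-tiling in `G`: vertex-disjoint copies of `H` in `G`. -/
def IsHTiling {α β : Type*} (H : SimpleGraph α) (G : SimpleGraph β) (F : Set (α ↪ β)) : Prop :=
  (∀ f ∈ F, IsCopyEmb H G f) ∧
    ∀ f ∈ F, ∀ g ∈ F, f ≠ g → Disjoint (Set.range (⇑f)) (Set.range (⇑g))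

/-- The set of vertices covered by the tiling `F`. -/
def tilingCover {α β : Type*} (F : Set (α ↪ β)) : Set β := ⋃ f ∈ F, Set.range (⇑f)

/-- `G` contains a perfect `H`-tiling. -/
def HasPerfectHTiling {α β : Type*} (H : SimpleGraph α) (G : SimpleGraph β) : Prop :=
  ∃ F : Set (α ↪ β), IsHTiling H G F ∧ tilingCover F = Set.univ

/-- `d(H') = e(H')/(|H'| - 1)` for a subgraph `H'`. -/
noncomputable def dRatio {V : Type*} {H : SimpleGraph V} (H' : H.Subgraph) : ℝ :=
  (H'.edgeSet.ncard : ℝ) / ((H'.verts.ncard : ℝ) - 1)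

/-- `d*(H) = max{d(H') : H' ⊆ H, |H'| ≥ 2}`. -/
noncomputable def dStar {V : Type*} (H : SimpleGraph V) : ℝ :=
  sSup {x : ℝ | ∃ H' : H.Subgraph, 2 ≤ H'.verts.ncard ∧ x = dRatio H'}

noncomputable def pairDensity {V : Type*} (G : SimpleGraph V) (A B : Set V) : ℝ :=
  (({p : V × V | p.1 ∈ A ∧ p.2 ∈ B ∧ G.Adj p.1 p.2}).ncard : ℝ) /
    ((A.ncard : ℝ) * (B.ncard : ℝ))

/-- `(A, B)` is an `ε`-regular pair in `G`. -/
def IsRegularPair {V : Type*} (G : SimpleGraph V) (A B : Set V) (ε : ℝ) : Prop :=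
  ∀ X ⊆ A, ∀ Y ⊆ B, ε * A.ncard ≤ (X.ncard : ℝ) → ε * B.ncard ≤ (Y.ncard : ℝ) →
    |pairDensity G A B - pairDensity G X Y| < ε

/-- `(A, B)` is an `(ε, d)`-super-regular pair in `G`. -/
def IsSuperRegularPair {V : Type*} (G : SimpleGraph V) (A B : Set V) (ε d : ℝ) : Prop :=
  (∀ X ⊆ A, ∀ Y ⊆ B, ε * A.ncard ≤ (X.ncard : ℝ) → ε * B.ncard ≤ (Y.ncard : ℝ) →
      d < pairDensity G X Y) ∧
    (∀ a ∈ A, d * B.ncard < ((G.neighborSet a ∩ B).ncard : ℝ)) ∧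
    (∀ b ∈ B, d * A.ncard < ((G.neighborSet b ∩ A).ncard : ℝ))

lemma exists_dStar_max (h : ℕ) (H : SimpleGraph (Fin h)) (hH : H.edgeSet.Nonempty) :
    ∃ H' : H.Subgraph, 2 ≤ H'.verts.ncard ∧ dStar H = dRatio H' ∧ 1 ≤ dStar H := by
  set S := {x : ℝ | ∃ H' : H.Subgraph, 2 ≤ H'.verts.ncard ∧ x = dRatio H'} with hS
  have hfin : S.Finite := by
    apply Set.Finite.subset (Set.Finite.image
      (f := fun p : ℕ × ℕ => (p.1 : ℝ) / ((p.2 : ℝ) - 1))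
      (((Set.finite_Iic (Fintype.card (Sym2 (Fin h)))).prod (Set.finite_Iic h))))
    rintro x ⟨H', hv, rfl⟩
    refine ⟨⟨H'.edgeSet.ncard, H'.verts.ncard⟩, ⟨?_, ?_⟩, rfl⟩
    · have := (Set.ncard_le_ncard (Set.subset_univ H'.edgeSet) Set.finite_univ).trans
        (le_of_eq (Set.ncard_univ _))
      simpa [Nat.card_eq_fintype_card] using this
    · have := (Set.ncard_le_ncard (Set.subset_univ H'.verts) Set.finite_univ).trans
        (le_of_eq (Set.ncard_univ _))
      simpa [Nat.card_eq_fintype_card] using this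
  have hone : (1 : ℝ) ∈ S := by
    obtain ⟨e, he⟩ := hH
    induction e with
    | _ u v =>
      rw [SimpleGraph.mem_edgeSet] at he
      refine ⟨H.subgraphOfAdj he, ?_, ?_⟩
      · simp only [SimpleGraph.subgraphOfAdj_verts]
        rw [Set.ncard_pair he.ne]
      · simp only [dRatio, SimpleGraph.subgraphOfAdj_verts, SimpleGraph.edgeSet_subgraphOfAdj]
        rw [Set.ncard_pair he.ne, Set.ncard_singleton]; push_cast
        norm_num
  have hne : S.Nonempty := ⟨1, hone⟩
  have hmem := hne.csSup_mem hfin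
  obtain ⟨H', hv, hx⟩ := hmem
  exact ⟨H', hv, hx, le_csSup hfin.bddAbove hone⟩

lemma exists_setup {h : ℕ} {H : SimpleGraph (Fin h)} (H' : H.Subgraph) :
    ∃ (ι : Fin (H'.verts.ncard) → Fin h) (J : SimpleGraph (Fin H'.verts.ncard))
      (EJ : Finset (Sym2 (Fin H'.verts.ncard))),
      Function.Injective ι ∧ Set.range ι = H'.verts ∧
      (∀ i j, J.Adj i j ↔ H'.Adj (ι i) (ι j)) ∧
      (∀ ed, ed ∈ EJ ↔ ed ∈ J.edgeSet) ∧ EJ.card = H'.edgeSet.ncard := by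
  classical
  have hfin : H'.verts.Finite := Set.toFinite _
  have hcard : hfin.toFinset.card = H'.verts.ncard := (Set.ncard_eq_toFinset_card _ hfin).symm
  set ι : Fin (H'.verts.ncard) → Fin h := ⇑(hfin.toFinset.orderEmbOfFin hcard) with hι
  have hιinj : Function.Injective ι := (hfin.toFinset.orderEmbOfFin hcard).injective
  have hιrange : Set.range ι = H'.verts := by
    rw [hι, Finset.range_orderEmbOfFin, Set.Finite.coe_toFinset]
  set J : SimpleGraph (Fin H'.verts.ncard) :=
    { Adj := fun i j => H'.Adj (ι i) (ι j)
      symm := ⟨fun i j hij => hij.symm⟩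
      loopless := ⟨fun i hi => (H.loopless.irrefl _ (H'.adj_sub hi))⟩ } with hJ
  have hJadj : ∀ i j, J.Adj i j ↔ H'.Adj (ι i) (ι j) := fun i j => Iff.rfl
  have hEfin : J.edgeSet.Finite := Set.toFinite _
  refine ⟨ι, J, hEfin.toFinset, hιinj, hιrange, hJadj, fun ed => hEfin.mem_toFinset, ?_⟩
  have himg : Sym2.map ι '' J.edgeSet = H'.edgeSet := by
    ext e
    constructor
    · rintro ⟨ed, hed, rfl⟩
      induction ed with
      | _ u w =>
        rw [SimpleGraph.mem_edgeSet] at hed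
        rw [Sym2.map_pair_eq, SimpleGraph.Subgraph.mem_edgeSet]
        exact (hJadj u w).mp hed
    · intro he
      induction e with
      | _ u w =>
        rw [SimpleGraph.Subgraph.mem_edgeSet] at he
        obtain ⟨i, hi⟩ : u ∈ Set.range ι := by rw [hιrange]; exact H'.edge_vert he
        obtain ⟨j, hj⟩ : w ∈ Set.range ι := by rw [hιrange]; exact H'.edge_vert he.symm
        refine ⟨s(i, j), ?_, by rw [Sym2.map_pair_eq, hi, hj]⟩
        rw [SimpleGraph.mem_edgeSet]
        exact (hJadj i j).mpr (by rw [hi, hj]; exact he)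
  calc hEfin.toFinset.card = J.edgeSet.ncard := (Set.ncard_eq_toFinset_card _ hEfin).symm
    _ = (Sym2.map ι '' J.edgeSet).ncard := (Set.ncard_image_of_injective _ (Sym2.map.injective hιinj)).symm
    _ = H'.edgeSet.ncard := by rw [himg]

instance (p : ℝ) : IsProbabilityMeasure (bernoulliMeasure p) :=
  PMF.toMeasure.isProbabilityMeasure _

lemma bernoulliMeasure_true (p : ℝ) :
    bernoulliMeasure p {true} = min (ENNReal.ofReal p) 1 := by
  rw [bernoulliMeasure, PMF.toMeasure_apply_singleton _ _ (measurableSet_singleton _),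
    PMF.bernoulli_apply]
  rfl

lemma cyl_measure (n : ℕ) (p : ℝ) {v' k : ℕ} (J : SimpleGraph (Fin v'))
    (EJ : Finset (Sym2 (Fin v'))) (hEJ : ∀ ed, ed ∈ EJ ↔ ed ∈ J.edgeSet)
    (T : Fin k → Fin v' → Fin n) (hinj : ∀ i, Function.Injective (T i))
    (hdisj : ∀ i j, i ≠ j → Disjoint (Set.range (T i)) (Set.range (T j))) :
    erMeasure n p {ω | ∀ i u w, J.Adj u w → ω s(T i u, T i w) = true}
      = (min (ENNReal.ofReal p) 1) ^ (k * EJ.card) := by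
  classical
  set q := min (ENNReal.ofReal p) 1 with hq
  set FT : Finset (Sym2 (Fin n)) := Finset.univ.biUnion (fun i => EJ.image (Sym2.map (T i)))
    with hFT
  have hmemFT : ∀ e, e ∈ FT ↔ ∃ i, ∃ ed ∈ EJ, Sym2.map (T i) ed = e := by
    intro e; simp [hFT]
  have hset : {ω : Sym2 (Fin n) → Bool | ∀ i u w, J.Adj u w → ω s(T i u, T i w) = true}
      = Set.univ.pi (fun e => if e ∈ FT then ({true} : Set Bool) else Set.univ) := by
    ext ω
    simp only [Set.mem_setOf_eq, Set.mem_pi, Set.mem_univ, forall_true_left]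
    constructor
    · intro hω e
      by_cases he : e ∈ FT
      · simp only [he, if_true, Set.mem_singleton_iff]
        obtain ⟨i, ed, hed, rfl⟩ := (hmemFT e).mp he
        induction ed with
        | _ u w =>
          rw [Sym2.map_pair_eq]
          exact hω i u w ((SimpleGraph.mem_edgeSet J).mp ((hEJ _).mp hed))
      · simp [he]
    · intro hω i u w hadj
      have he : s(T i u, T i w) ∈ FT := (hmemFT _).mpr
        ⟨i, s(u, w), (hEJ _).mpr ((SimpleGraph.mem_edgeSet J).mpr hadj), Sym2.map_pair_eq _ _ _⟩
      have := hω s(T i u, T i w)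
      simpa [he] using this
  have hdisjim : ∀ i ∈ Finset.univ, ∀ j ∈ Finset.univ, i ≠ j →
      Disjoint (EJ.image (Sym2.map (T i))) (EJ.image (Sym2.map (T j))) := by
    intro i _ j _ hij
    rw [Finset.disjoint_left]
    rintro e hei hej
    obtain ⟨ed, hed, rfl⟩ := Finset.mem_image.mp hei
    obtain ⟨ed', hed', heq⟩ := Finset.mem_image.mp hej
    induction ed with
    | _ u w =>
      induction ed' with
      | _ u' w' =>
        rw [Sym2.map_pair_eq, Sym2.map_pair_eq] at heq
        have hmem : T i u ∈ (s(T j u', T j w') : Sym2 (Fin n)) := by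
          rw [heq]; exact Sym2.mem_mk_left _ _
        rw [Sym2.mem_iff] at hmem
        have : T i u ∈ Set.range (T j) := by
          rcases hmem with h1 | h1 <;> exact ⟨_, h1.symm⟩
        exact Set.disjoint_left.mp (hdisj i j hij) ⟨u, rfl⟩ this
  have hcard : FT.card = k * EJ.card := by
    rw [hFT, Finset.card_biUnion hdisjim]
    simp [Finset.card_image_of_injective _ (Sym2.map.injective (hinj _)), mul_comm]
  rw [hset, erMeasure, Measure.pi_pi]
  have : ∀ e : Sym2 (Fin n), bernoulliMeasure p (if e ∈ FT then ({true} : Set Bool) else Set.univ)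
      = if e ∈ FT then q else 1 := by
    intro e
    split
    · exact bernoulliMeasure_true p
    · exact measure_univ
  simp_rw [this]
  rw [Finset.prod_ite, Finset.prod_const, Finset.prod_const_one, mul_one,
    Finset.filter_univ_mem, hcard]

lemma index_card_le {n k v' : ℕ} (v0 : Fin v') :
    Nat.card {T : Fin k → Fin v' → Fin n // StrictMono (fun i => T i v0)}
      ≤ 2 ^ n * (n ^ (v' - 1)) ^ k := by
  classical
  set Θ : {T : Fin k → Fin v' → Fin n // StrictMono (fun i => T i v0)} →
      Finset (Fin n) × (Fin k → {x : Fin v' // x ≠ v0} → Fin n) :=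
    fun T => (Finset.univ.image (fun i => T.1 i v0),
      fun i (x : {x : Fin v' // x ≠ v0}) => T.1 i x.1) with hΘ
  have hinj : Function.Injective Θ := by
    rintro T T' heq
    rw [Prod.ext_iff] at heq
    obtain ⟨h1, h2⟩ := heq
    simp only [hΘ] at h1 h2
    set f : Fin k → Fin n := fun i => T.1 i v0 with hf
    set f' : Fin k → Fin n := fun i => T'.1 i v0 with hf'
    set s : Finset (Fin n) := Finset.univ.image f with hs
    have hcards : s.card = k := by
      rw [hs, Finset.card_image_of_injective _ T.2.injective, Finset.card_univ, Fintype.card_fin]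
    have e1 : f = ⇑(s.orderEmbOfFin hcards) :=
      Finset.orderEmbOfFin_unique hcards
        (fun i => Finset.mem_image_of_mem _ (Finset.mem_univ i)) T.2
    have e2 : f' = ⇑(s.orderEmbOfFin hcards) :=
      Finset.orderEmbOfFin_unique hcards
        (fun i => by rw [h1]; exact Finset.mem_image_of_mem _ (Finset.mem_univ i)) T'.2
    have hfeq : f = f' := e1.trans e2.symm
    apply Subtype.ext
    funext i x
    by_cases hx : x = v0
    · subst hx
      exact congrFun hfeq i
    · exact congrFun (congrFun h2 i) ⟨x, hx⟩
  have := Nat.card_le_card_of_injective Θ hinj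
  refine this.trans (le_of_eq ?_)
  rw [Nat.card_eq_fintype_card, Fintype.card_prod, Fintype.card_finset, Fintype.card_fin]
  congr 1
  rw [Fintype.card_fun, Fintype.card_fun, Fintype.card_fin, Fintype.card_fin]
  congr 2
  have : Fintype.card {x : Fin v' // x ≠ v0} = v' - 1 := by
    simp [Fintype.card_subtype_compl]
  rw [this]

lemma extraction {h m : ℕ} {H : SimpleGraph (Fin h)} {v' : ℕ}
    (v0 : Fin v') (ι : Fin v' → Fin h) (hιinj : Function.Injective ι)
    (J : SimpleGraph (Fin v')) (hJH : ∀ i j, J.Adj i j → H.Adj (ι i) (ι j))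
    (A : Set (Fin (h * m))) (hh : 0 < h)
    (ω : Sym2 (Fin (h * m)) → Bool)
    (hPT : HasPerfectHTiling H
      (SimpleGraph.fromRel (fun u v => u ∈ A ∧ v ∉ A) ⊔ graphOfFn ω)) :
    ∃ T : Fin (m - A.ncard) → Fin v' → Fin (h * m),
      StrictMono (fun i => T i v0) ∧ (∀ i, Function.Injective (T i)) ∧
      (∀ i j, i ≠ j → Disjoint (Set.range (T i)) (Set.range (T j))) ∧
      (∀ i u w, J.Adj u w → ω s(T i u, T i w) = true) := by
  classical
  set k := m - A.ncard with hk
  rcases Nat.eq_zero_or_pos k with hk0 | hkpos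
  · refine ⟨fun i => (hk0 ▸ i : Fin 0).elim0, ?_, ?_, ?_, ?_⟩ <;>
      first
        | (intro i; exact absurd i.2 (by omega))
        | (intro i j; exact absurd i.2 (by omega))
  have hm : 0 < m := by omega
  have hn : 0 < h * m := Nat.mul_pos hh hm
  obtain ⟨F, ⟨hcopy, hdisj⟩, hcover⟩ := hPT
  set z0 : Fin h := ⟨0, hh⟩ with hz0
  have hev : Set.InjOn (fun f : Fin h ↪ Fin (h * m) => f z0) F := by
    intro f hf g hg hfg
    by_contra hne
    exact Set.disjoint_left.mp (hdisj f hf g hg hne) ⟨z0, rfl⟩ ⟨z0, hfg.symm⟩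
  have hFfin : F.Finite := Set.Finite.of_finite_image (Set.toFinite _) hev
  set 𝒻 := hFfin.toFinset with h𝒻
  have hrangedisj : ∀ f ∈ 𝒻, ∀ g ∈ 𝒻, f ≠ g → Disjoint (Set.range ⇑f) (Set.range ⇑g) := by
    intro f hf g hg hne
    exact hdisj f (hFfin.mem_toFinset.mp hf) g (hFfin.mem_toFinset.mp hg) hne
  have hcard𝒻 : 𝒻.card = m := by
    have huniv : (Finset.univ : Finset (Fin (h * m))) = 𝒻.biUnion (fun f => Finset.univ.image ⇑f) := by
      ext x
      simp only [Finset.mem_univ, true_iff, Finset.mem_biUnion, Finset.mem_image]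
      have hx : x ∈ tilingCover F := by rw [hcover]; trivial
      obtain ⟨f, hf, y, hy⟩ := by simpa [tilingCover] using hx
      exact ⟨f, hFfin.mem_toFinset.mpr hf, y, by simp, hy⟩
    have hdisjim : ∀ f ∈ 𝒻, ∀ g ∈ 𝒻, f ≠ g →
        Disjoint (Finset.univ.image ⇑f) (Finset.univ.image ⇑g) := by
      intro f hf g hg hne
      rw [Finset.disjoint_left]
      rintro x hxf hxg
      obtain ⟨y, _, rfl⟩ := Finset.mem_image.mp hxf
      obtain ⟨y', _, hy'⟩ := Finset.mem_image.mp hxg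
      exact Set.disjoint_left.mp (hrangedisj f hf g hg hne) ⟨y, rfl⟩ ⟨y', hy'⟩
    have := congrArg Finset.card huniv
    rw [Finset.card_univ, Fintype.card_fin, Finset.card_biUnion hdisjim] at this
    have hsum : ∑ f ∈ 𝒻, (Finset.univ.image ⇑f).card = 𝒻.card * h := by
      have hcc : ∀ f ∈ 𝒻, (Finset.univ.image ⇑f).card = h := by
        intro f _
        rw [Finset.card_image_of_injective _ f.injective, Finset.card_univ, Fintype.card_fin]
      rw [Finset.sum_congr rfl hcc, Finset.sum_const, smul_eq_mul]
    rw [hsum] at this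
    have h2 : h * m = h * 𝒻.card := this.trans (Nat.mul_comm _ _)
    exact (Nat.eq_of_mul_eq_mul_left hh h2).symm
  set 𝒻A := 𝒻.filter (fun f : Fin h ↪ Fin (h * m) => ∃ x, x ∈ A ∧ x ∈ Set.range ⇑f) with h𝒻A
  have hAcard : 𝒻A.card ≤ A.ncard := by
    have hAfin : A.Finite := Set.toFinite _
    rw [Set.ncard_eq_toFinset_card _ hAfin]
    refine Finset.card_le_card_of_injOn
      (fun f : Fin h ↪ Fin (h * m) => if hf : ∃ x, x ∈ A ∧ x ∈ Set.range ⇑f then hf.choose else ⟨0, hn⟩) ?_ ?_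
    · intro f hf
      obtain ⟨-, hex⟩ := Finset.mem_filter.mp hf
      simp only [hex, dif_pos]
      exact hAfin.mem_toFinset.mpr hex.choose_spec.1
    · intro f hf g hg heq
      obtain ⟨hf𝒻, hexf⟩ := Finset.mem_filter.mp hf
      obtain ⟨hg𝒻, hexg⟩ := Finset.mem_filter.mp hg
      simp only [hexf, hexg, dif_pos] at heq
      by_contra hne
      refine Set.disjoint_left.mp (hrangedisj f hf𝒻 g hg𝒻 hne) hexf.choose_spec.2 ?_
      rw [heq]; exact hexg.choose_spec.2
  have hBcard : k ≤ (𝒻 \ 𝒻A).card := by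
    rw [Finset.card_sdiff_of_subset (Finset.filter_subset _ _), hcard𝒻]
    exact Nat.sub_le_sub_left hAcard m
  obtain ⟨𝒻B, h𝒻Bsub, h𝒻Bcard⟩ := Finset.exists_subset_card_eq hBcard
  have homega : ∀ f ∈ 𝒻 \ 𝒻A, ∀ u v, H.Adj u v → ω s(f u, f v) = true := by
    intro f hf u v huv
    obtain ⟨hf𝒻, hfA⟩ := Finset.mem_sdiff.mp hf
    have hnex : ¬ ∃ x, x ∈ A ∧ x ∈ Set.range ⇑f := by
      intro hex
      exact hfA (Finset.mem_filter.mpr ⟨hf𝒻, hex⟩)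
    have hadj := hcopy f (hFfin.mem_toFinset.mp hf𝒻) huv
    rw [SimpleGraph.sup_adj] at hadj
    rcases hadj with hadj | hadj
    · rw [SimpleGraph.fromRel_adj] at hadj
      rcases hadj.2 with ⟨hA, -⟩ | ⟨hA, -⟩
      · exact absurd ⟨f u, hA, ⟨u, rfl⟩⟩ hnex
      · exact absurd ⟨f v, hA, ⟨v, rfl⟩⟩ hnex
    · exact (show f u ≠ f v ∧ ω s(f u, f v) = true from hadj).2
  set s := 𝒻B.image (fun f => f (ι v0)) with hs
  have hscard : s.card = k := by
    rw [hs, Finset.card_image_of_injOn, h𝒻Bcard]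
    intro f hf g hg heq
    by_contra hne
    have hf' : f ∈ 𝒻 := (Finset.mem_sdiff.mp (h𝒻Bsub hf)).1
    have hg' : g ∈ 𝒻 := (Finset.mem_sdiff.mp (h𝒻Bsub hg)).1
    exact Set.disjoint_left.mp (hrangedisj f hf' g hg' hne) ⟨ι v0, rfl⟩ ⟨ι v0, heq.symm⟩
  set es := s.orderEmbOfFin hscard with hes
  have hQ : ∀ i : Fin k, ∃ f, f ∈ 𝒻B ∧ f (ι v0) = es i := by
    intro i
    have : es i ∈ s := s.orderEmbOfFin_mem hscard i
    obtain ⟨f, hf, hfv⟩ := Finset.mem_image.mp this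
    exact ⟨f, hf, hfv⟩
  choose Fb hFbmem hFbval using hQ
  refine ⟨fun i u => Fb i (ι u), ?_, ?_, ?_, ?_⟩
  · intro i j hij
    simp only
    rw [hFbval, hFbval]
    exact (s.orderEmbOfFin hscard).strictMono hij
  · intro i
    exact (Fb i).injective.comp hιinj
  · intro i j hij
    have hne : Fb i ≠ Fb j := by
      intro heq
      apply (es.injective.ne hij)
      rw [← hFbval, ← hFbval, heq]
    have hi : Fb i ∈ 𝒻 := (Finset.mem_sdiff.mp (h𝒻Bsub (hFbmem i))).1
    have hj : Fb j ∈ 𝒻 := (Finset.mem_sdiff.mp (h𝒻Bsub (hFbmem j))).1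
    refine Set.disjoint_of_subset ?_ ?_ (hrangedisj _ hi _ hj hne)
    · rintro x ⟨u, rfl⟩; exact ⟨ι u, rfl⟩
    · rintro x ⟨u, rfl⟩; exact ⟨ι u, rfl⟩
  · intro i u w huw
    exact homega (Fb i) (h𝒻Bsub (hFbmem i)) _ _ (hJH u w huw)

lemma exists_setup' {h : ℕ} {H : SimpleGraph (Fin h)} (H' : H.Subgraph) :
    ∃ (v' e' : ℕ) (ι : Fin v' → Fin h) (J : SimpleGraph (Fin v'))
      (EJ : Finset (Sym2 (Fin v'))),
      v' = H'.verts.ncard ∧ e' = H'.edgeSet.ncard ∧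
      Function.Injective ι ∧ Set.range ι = H'.verts ∧
      (∀ i j, J.Adj i j ↔ H'.Adj (ι i) (ι j)) ∧
      (∀ ed, ed ∈ EJ ↔ ed ∈ J.edgeSet) ∧ EJ.card = e' := by
  obtain ⟨ι, J, EJ, h1, h2, h3, h4, h5⟩ := exists_setup H'
  exact ⟨_, _, ι, J, EJ, rfl, rfl, h1, h2, h3, h4, h5⟩

lemma real_final {h v' e' m k : ℕ} {b c d ε : ℝ}
    (hh : 1 ≤ h) (hv : 2 ≤ v') (he1 : 1 ≤ e') (hb : 0 < b) (hm : 1 ≤ m)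
    (hd : d = (e' : ℝ) / ((v' : ℝ) - 1))
    (hc0 : 0 < c) (hc1 : c ≤ 1)
    (hε : 0 < ε) (hεk : ε * m ≤ (k : ℝ))
    (hcδ : c ≤ b ^ (v' - 1) * (4 : ℝ) ^ (-((h : ℝ) / ε))) :
    (2:ℝ)^(h*m) * ((((h*m : ℕ)):ℝ)^(v'-1))^k * (c * ((b * (((h*m : ℕ)):ℝ)) ^ (-(1/d))))^(k*e')
      ≤ (1/2:ℝ)^m := by
  set n := h * m with hn
  have hnpos : 0 < n := Nat.mul_pos (by omega) (by omega)
  set nR : ℝ := (n : ℝ) with hnR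
  have hnRpos : (0:ℝ) < nR := by positivity
  have hbn : (0:ℝ) < b * nR := by positivity
  have hv1 : ((v':ℝ) - 1) = ((v' - 1 : ℕ) : ℝ) := by
    rw [Nat.cast_sub (by omega)]; norm_num
  have hv1pos : (0:ℝ) < (v':ℝ) - 1 := by
    have : (2:ℝ) ≤ (v':ℝ) := by exact_mod_cast hv
    linarith
  have he'pos : (0:ℝ) < (e':ℝ) := by exact_mod_cast he1
  have hdpos : 0 < d := by rw [hd]; positivity
  have hratio : (e':ℝ) / d = (v':ℝ) - 1 := by
    rw [hd]; field_simp
  set P := (v' - 1) * k with hP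
  set δ : ℝ := (4:ℝ) ^ (-((h : ℝ) / ε)) with hδ
  have hδpos : 0 < δ := Real.rpow_pos_of_pos (by norm_num) _
  have hxpow : (c * ((b*nR)^(-(1/d))))^(k*e') = c^(k*e') * ((b*nR)^P)⁻¹ := by
    rw [mul_pow]
    congr 1
    rw [← Real.rpow_natCast ((b*nR)^(-(1/d))) (k*e'), ← Real.rpow_mul hbn.le]
    have hexp : (-(1/d)) * ((k*e' : ℕ):ℝ) = -(((P : ℕ)):ℝ) := by
      have e1 : (-(1/d)) * ((k*e' : ℕ):ℝ) = -((k:ℝ) * ((e':ℝ)/d)) := by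
        push_cast; ring
      rw [e1, hratio, hP]
      push_cast [Nat.cast_sub (by omega : 1 ≤ v')]
      ring
    rw [hexp, Real.rpow_neg hbn.le, Real.rpow_natCast]
  have hbP : (0:ℝ) < b ^ P := by positivity
  have hnP : (0:ℝ) < nR ^ P := by positivity
  have lhs_eq : (2:ℝ)^n * (nR^(v'-1))^k * (c * ((b*nR)^(-(1/d))))^(k*e')
      = 2^n * c^(k*e') / b^P := by
    rw [hxpow, ← pow_mul, mul_pow]
    field_simp
    ring
  rw [lhs_eq]
  have hcke : c^(k*e') ≤ b^P * δ^k := by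
    have h1 : c^(k*e') = (c^e')^k := by rw [← pow_mul, mul_comm]
    have h2 : c^e' ≤ c := by
      calc c^e' ≤ c^1 := pow_le_pow_of_le_one hc0.le hc1 he1
        _ = c := pow_one c
    have h3 : (c^e')^k ≤ (b^(v'-1) * δ)^k :=
      pow_le_pow_left₀ (by positivity) (h2.trans hcδ) k
    calc c^(k*e') = (c^e')^k := h1
      _ ≤ (b^(v'-1) * δ)^k := h3
      _ = b^P * δ^k := by rw [mul_pow, ← pow_mul]
  have step1 : 2^n * c^(k*e') / b^P ≤ (2:ℝ)^n * δ^k := by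
    rw [div_le_iff₀ hbP]
    calc (2:ℝ)^n * c^(k*e') ≤ 2^n * (b^P * δ^k) := by
          apply mul_le_mul_of_nonneg_left hcke (by positivity)
      _ = 2^n * δ^k * b^P := by ring
  refine step1.trans ?_
  have hδk : δ^k ≤ ((4:ℝ)^n)⁻¹ := by
    rw [hδ, ← Real.rpow_natCast ((4:ℝ)^(-((h : ℝ) / ε))) k, ← Real.rpow_mul (by norm_num)]
    have hexp2 : (-((h : ℝ) / ε)) * (k:ℝ) ≤ -((n:ℝ)) := by
      have h4 : (h:ℝ) * m ≤ ((h:ℝ)/ε) * k := by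
        have hmul := mul_le_mul_of_nonneg_left hεk (by positivity : (0:ℝ) ≤ (h:ℝ)/ε)
        calc (h:ℝ) * m = ((h:ℝ)/ε) * (ε * m) := by field_simp
          _ ≤ ((h:ℝ)/ε) * k := hmul
      have hnm : (n:ℝ) = (h:ℝ) * m := by rw [hn]; push_cast; ring
      rw [hnm]; linarith
    calc (4:ℝ) ^ ((-((h : ℝ) / ε)) * (k:ℝ))
        ≤ (4:ℝ) ^ (-((n:ℝ))) := Real.rpow_le_rpow_of_exponent_le (by norm_num) hexp2
      _ = ((4:ℝ)^n)⁻¹ := by rw [Real.rpow_neg (by norm_num), Real.rpow_natCast]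
  have final1 : (2:ℝ)^n * δ^k ≤ 2^n * ((4:ℝ)^n)⁻¹ :=
    mul_le_mul_of_nonneg_left hδk (by positivity)
  refine final1.trans ?_
  have final2 : (2:ℝ)^n * ((4:ℝ)^n)⁻¹ = (1/2:ℝ)^n := by
    have h4n : (4:ℝ)^n = 2^n * 2^n := by rw [← mul_pow]; norm_num
    rw [h4n, div_pow, one_pow]
    field_simp
  rw [final2]
  exact pow_le_pow_of_le_one (by norm_num) (by norm_num)
    (Nat.le_mul_of_pos_left m (by omega))


/-- extremal example, Section 2.1: for `H` with at least one edge and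
`a + b = 1`, `b > a(|H|-1)`, there is `c = c(H, ε) > 0` (with `ε := b - a(|H|-1)`) such that,
for `G_n` the complete bipartite graph on `[n]` with parts of sizes `an` and `bn`
(`n` divisible by `|H|`), if `p ≤ c (bn)^{-1/d*(H)}` then a.a.s. `G_n ∪ G_{n,p}` has no
perfect `H`-tiling. -/
theorem statement1 (h : ℕ) (H : SimpleGraph (Fin h)) (hH : H.edgeSet.Nonempty)
    (a b : ℝ) (ha : 0 < a) (hb : 0 < b) (hab : a + b = 1) (hba : a * ((h : ℝ) - 1) < b) :
    ∃ c : ℝ, 0 < c ∧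
      ∀ (p : ℕ → ℝ) (A : (m : ℕ) → Set (Fin (h * m))),
        (∀ m : ℕ, (A m).ncard = ⌊a * ((h * m : ℕ) : ℝ)⌋₊) →
        (∀ m : ℕ, p m ≤ c * (b * ((h * m : ℕ) : ℝ)) ^ (-(1 / dStar H))) →
        Tendsto
          (fun m : ℕ =>
            erMeasure (h * m) (p m)
              {ω | HasPerfectHTiling H
                (SimpleGraph.fromRel (fun u v => u ∈ A m ∧ v ∉ A m) ⊔ graphOfFn ω)})
          atTop (nhds 0) := by
  classical
  obtain ⟨H', hv, hdSt, hdSt1⟩ := exists_dStar_max h H hH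
  obtain ⟨v', e', ι, J, EJ, hv'eq, he'eq, hιinj, hιrange, hJadj, hEJ, hEJcard⟩ :=
    exists_setup' H'
  rw [← hv'eq] at hv
  have hh2 : 2 ≤ h := by
    obtain ⟨e, he⟩ := hH
    induction e with
    | _ u v =>
      rw [SimpleGraph.mem_edgeSet] at he
      exact Fin.nontrivial_iff_two_le.mp ⟨⟨u, v, he.ne⟩⟩
  have hdR : dStar H = (e' : ℝ) / ((v' : ℝ) - 1) := by
    rw [hdSt]
    show (H'.edgeSet.ncard : ℝ) / ((H'.verts.ncard : ℝ) - 1) = _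
    rw [← hv'eq, ← he'eq]
  have hv1pos : (0:ℝ) < (v':ℝ) - 1 := by
    have : (2:ℝ) ≤ (v':ℝ) := by exact_mod_cast hv
    linarith
  have he1 : 1 ≤ e' := by
    have h1 : (1:ℝ) ≤ (e' : ℝ) / ((v' : ℝ) - 1) := hdR ▸ hdSt1
    have h2 : (v':ℝ) - 1 ≤ (e':ℝ) := (one_le_div hv1pos).mp h1
    have hvR : (2:ℝ) ≤ (v':ℝ) := by exact_mod_cast hv
    have h3 : (1:ℝ) ≤ (e':ℝ) := by linarith
    exact_mod_cast h3
  set ε : ℝ := 1 - a * h with hεdef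
  have hah : a * (h:ℝ) < 1 := by
    have hexpand : a * ((h:ℝ) - 1) = a * h - a := by ring
    linarith
  have hε : 0 < ε := by rw [hεdef]; linarith
  set δ : ℝ := (4:ℝ) ^ (-((h : ℝ) / ε)) with hδdef
  have hδpos : 0 < δ := Real.rpow_pos_of_pos (by norm_num) _
  set c : ℝ := min 1 (b ^ (v' - 1) * δ) with hcdef
  have hc0 : 0 < c := lt_min (by norm_num) (by positivity)
  refine ⟨c, hc0, ?_⟩
  intro p A hA hp
  have htop : Tendsto (fun m : ℕ => ENNReal.ofReal ((1/2:ℝ)^m)) atTop (nhds 0) := by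
    have := ENNReal.tendsto_ofReal
      (tendsto_pow_atTop_nhds_zero_of_lt_one (r := (1/2:ℝ)) (by norm_num) (by norm_num))
    simpa using this
  refine tendsto_of_tendsto_of_tendsto_of_le_of_le' tendsto_const_nhds htop
    (Eventually.of_forall (fun m => zero_le)) ?_
  rw [eventually_atTop]
  refine ⟨1, fun m hm => ?_⟩
  -- Notation for this m
  set n := h * m with hn
  have hnpos : 0 < n := Nat.mul_pos (by omega) (by omega)
  set k := m - (A m).ncard with hk
  set v0 : Fin v' := ⟨0, by omega⟩ with hv0
  set q : ENNReal := min (ENNReal.ofReal (p m)) 1 with hq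
  set x : ℝ := c * (b * ((n : ℕ):ℝ)) ^ (-(1 / dStar H)) with hx
  have hxnonneg : 0 ≤ x := by
    rw [hx]
    have : (0:ℝ) ≤ (b * ((n : ℕ):ℝ)) ^ (-(1 / dStar H)) := Real.rpow_nonneg (by positivity) _
    positivity
  set q' : ENNReal := ENNReal.ofReal x with hq'
  have hqq' : q ≤ q' := le_trans (min_le_left _ _) (ENNReal.ofReal_le_ofReal (hp m))
  -- the union bound index
  set I := {T : Fin k → Fin v' → Fin n //
    StrictMono (fun i => T i v0) ∧ (∀ i, Function.Injective (T i)) ∧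
    (∀ i j, i ≠ j → Disjoint (Set.range (T i)) (Set.range (T j)))} with hI
  haveI : Finite I := by
    apply Subtype.finite
  haveI : Fintype I := Fintype.ofFinite I
  have hsub : {ω : Sym2 (Fin n) → Bool | HasPerfectHTiling H
        (SimpleGraph.fromRel (fun u v => u ∈ A m ∧ v ∉ A m) ⊔ graphOfFn ω)}
      ⊆ ⋃ (T : I), {ω : Sym2 (Fin n) → Bool |
          ∀ i u w, J.Adj u w → ω s(T.1 i u, T.1 i w) = true} := by
    intro ω hω
    obtain ⟨T, h1, h2, h3, h4⟩ := extraction v0 ι hιinj J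
      (fun i j hij => H'.adj_sub ((hJadj i j).mp hij)) (A m) (by omega) ω hω
    exact Set.mem_iUnion.mpr ⟨⟨T, h1, h2, h3⟩, h4⟩
  have hcardI : Nat.card I ≤ 2 ^ n * (n ^ (v' - 1)) ^ k := by
    refine le_trans (Nat.card_le_card_of_injective
      (fun T : I => (⟨T.1, T.2.1⟩ : {T : Fin k → Fin v' → Fin n // StrictMono (fun i => T i v0)}))
      ?_) (index_card_le v0)
    intro T T' heq
    simp only [Subtype.mk.injEq] at heq
    exact Subtype.ext heq
  have key : erMeasure n (p m) {ω : Sym2 (Fin n) → Bool | HasPerfectHTiling H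
        (SimpleGraph.fromRel (fun u v => u ∈ A m ∧ v ∉ A m) ⊔ graphOfFn ω)}
      ≤ ENNReal.ofReal ((1/2:ℝ)^m) := by
    calc erMeasure n (p m) {ω : Sym2 (Fin n) → Bool | HasPerfectHTiling H
            (SimpleGraph.fromRel (fun u v => u ∈ A m ∧ v ∉ A m) ⊔ graphOfFn ω)}
        ≤ erMeasure n (p m) (⋃ (T : I), {ω : Sym2 (Fin n) → Bool |
            ∀ i u w, J.Adj u w → ω s(T.1 i u, T.1 i w) = true}) := measure_mono hsub
      _ ≤ ∑' (T : I), erMeasure n (p m) {ω : Sym2 (Fin n) → Bool |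
            ∀ i u w, J.Adj u w → ω s(T.1 i u, T.1 i w) = true} := measure_iUnion_le _
      _ = ∑' (_ : I), q ^ (k * e') := by
          refine tsum_congr (fun T => ?_)
          rw [cyl_measure n (p m) J EJ hEJ T.1 T.2.2.1 T.2.2.2, hEJcard]
      _ = (Nat.card I : ENNReal) * q ^ (k * e') := by
          rw [tsum_fintype, Finset.sum_const, Finset.card_univ, Nat.card_eq_fintype_card,
            nsmul_eq_mul]
      _ ≤ ((2 ^ n * (n ^ (v' - 1)) ^ k : ℕ) : ENNReal) * q ^ (k * e') := by
          exact mul_le_mul_left (Nat.cast_le.mpr hcardI) _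
      _ ≤ ((2 ^ n * (n ^ (v' - 1)) ^ k : ℕ) : ENNReal) * q' ^ (k * e') := by
          exact mul_le_mul_right (pow_le_pow_left' hqq' _) _
      _ = ENNReal.ofReal (((2 ^ n * (n ^ (v' - 1)) ^ k : ℕ) : ℝ) * x ^ (k * e')) := by
          rw [hq', ← ENNReal.ofReal_pow hxnonneg, ENNReal.ofReal_mul (by positivity),
            ENNReal.ofReal_natCast]
      _ ≤ ENNReal.ofReal ((1/2:ℝ)^m) := by
          apply ENNReal.ofReal_le_ofReal
          have hcast : ((2 ^ n * (n ^ (v' - 1)) ^ k : ℕ) : ℝ)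
              = (2:ℝ)^n * (((n:ℕ):ℝ)^(v'-1))^k := by push_cast; ring
          rw [hcast, hx]
          have hεk : ε * m ≤ (k : ℝ) := by
            have hfl : (A m).ncard = ⌊a * ((n : ℕ) : ℝ)⌋₊ := hA m
            have hanR : a * ((n:ℕ):ℝ) = (a * h) * m := by rw [hn]; push_cast; ring
            have hflm : (A m).ncard < m := by
              rw [hfl, Nat.floor_lt (by positivity)]
              rw [hanR]
              calc (a * h) * m < 1 * m := by
                    apply mul_lt_mul_of_pos_right hah
                    exact_mod_cast hm
                _ = (m:ℝ) := one_mul _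
            have hkcast : (k : ℝ) = (m : ℝ) - ((A m).ncard : ℝ) := by
              rw [hk, Nat.cast_sub (le_of_lt hflm)]
            have hfle : ((A m).ncard : ℝ) ≤ a * ((n:ℕ):ℝ) := by
              rw [hfl]; exact Nat.floor_le (by positivity)
            rw [hkcast, hεdef]
            rw [hanR] at hfle
            ring_nf
            nlinarith [hfle]
          exact real_final (by omega) hv he1 hb hm hdR hc0 (min_le_left _ _) hε hεk
            (min_le_right _ _)
  exact key
end

section
/- Given any t ∈ ℕ and ε > 0, there is an integer n₀ = n₀(t, ε) so that: if n ≥ n₀ and G is a graph on n vertices with minimum degree δ(G) ≥ n/(t+1), then G contains a K_{1,t}-tiling that covers all but at most εn vertices of G. -/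
open MeasureTheory Filter

section Statement8Aux

/-- The footprint of a star datum: centre plus leaves. -/
def starFP {n : ℕ} (p : Fin n × Finset (Fin n)) : Finset (Fin n) := insert p.1 p.2

/-- A valid system of vertex-disjoint stars with `t` leaves in `G`. -/
def ValidSys {n : ℕ} (G : SimpleGraph (Fin n)) (t : ℕ)
    (S : Finset (Fin n × Finset (Fin n))) : Prop :=
  (∀ p ∈ S, p.2.card = t ∧ p.1 ∉ p.2 ∧ ∀ x ∈ p.2, G.Adj p.1 x) ∧
    (S : Set (Fin n × Finset (Fin n))).Pairwise fun p q => Disjoint (starFP p) (starFP q)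

/-- The star embedding associated to a centre `c` and a leaf set `L` of size `t`. -/
noncomputable def mkEmb {n t : ℕ} (c : Fin n) (L : Finset (Fin n)) (hL : L.card = t)
    (hc : c ∉ L) : (Fin 1 ⊕ Fin t) ↪ Fin n where
  toFun := Sum.elim (fun _ => c) fun i => ((L.equivFinOfCardEq hL).symm i : Fin n)
  inj' := by
    rintro (a | a) (b | b) h <;> simp only [Sum.elim_inl, Sum.elim_inr] at h
    · exact congrArg Sum.inl (Fin.ext (by omega))
    · exact (hc (by rw [h]; exact Finset.coe_mem _)).elim
    · exact (hc (by rw [← h]; exact Finset.coe_mem _)).elim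
    · exact congrArg Sum.inr ((L.equivFinOfCardEq hL).symm.injective (Subtype.ext h))

lemma mkEmb_range {n t : ℕ} (c : Fin n) (L : Finset (Fin n)) (hL : L.card = t) (hc : c ∉ L) :
    Set.range ⇑(mkEmb c L hL hc) = ↑(insert c L) := by
  have hcoe : ⇑(mkEmb c L hL hc)
      = Sum.elim (fun _ => c) fun i => ((L.equivFinOfCardEq hL).symm i : Fin n) := rfl
  rw [hcoe, Set.Sum.elim_range]
  ext x
  simp only [Set.mem_union, Set.mem_range, Finset.coe_insert, Set.mem_insert_iff,
    Finset.mem_coe]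
  constructor
  · rintro (⟨i, rfl⟩ | ⟨i, rfl⟩)
    · exact Or.inl rfl
    · exact Or.inr (Finset.coe_mem _)
  · rintro (rfl | hx)
    · exact Or.inl ⟨⟨0, Nat.zero_lt_one⟩, rfl⟩
    · refine Or.inr ⟨L.equivFinOfCardEq hL ⟨x, hx⟩, ?_⟩
      simp

lemma mkEmb_copy {n t : ℕ} {G : SimpleGraph (Fin n)} (c : Fin n) (L : Finset (Fin n))
    (hL : L.card = t) (hc : c ∉ L) (hadj : ∀ x ∈ L, G.Adj c x) :
    IsCopyEmb (completeBipartiteGraph (Fin 1) (Fin t)) G (mkEmb c L hL hc) := by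
  rintro (a | a) (b | b) hab
  · simp [completeBipartiteGraph] at hab
  · exact hadj _ (Finset.coe_mem _)
  · exact (hadj _ (Finset.coe_mem _)).symm
  · simp [completeBipartiteGraph] at hab

end Statement8Aux

/-- Theorem 4.1, Komlós, special case: for any `t ∈ ℕ` and `ε > 0` there
is `n₀ = n₀(t, ε)` such that every graph `G` on `n ≥ n₀` vertices with
`δ(G) ≥ n/(t+1)` contains a `K_{1,t}`-tiling covering all but at most `εn` vertices. -/
theorem statement8 (t : ℕ) (ε : ℝ) (hε : 0 < ε) :
    ∃ n₀ : ℕ, ∀ n : ℕ, n₀ ≤ n → ∀ G : SimpleGraph (Fin n),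
      (∀ v : Fin n, (n : ℝ) / ((t : ℝ) + 1) ≤ ((G.neighborSet v).ncard : ℝ)) →
      ∃ F : Set ((Fin 1 ⊕ Fin t) ↪ Fin n),
        IsHTiling (completeBipartiteGraph (Fin 1) (Fin t)) G F ∧
          (((Set.univ : Set (Fin n)) \ tilingCover F).ncard : ℝ) ≤ ε * n := by
  classical
  refine ⟨⌈(2*(t:ℝ)*((t:ℝ)+1)+1)/ε^2⌉₊ + 1, fun n hn G hdeg => ?_⟩
  have hT1 : (0:ℝ) < (t:ℝ) + 1 := by positivity
  -- a maximum star system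
  have hne : (Finset.univ.filter fun S => ValidSys G t S).Nonempty :=
    ⟨∅, Finset.mem_filter.mpr ⟨Finset.mem_univ _, ⟨fun p hp => absurd hp (Finset.notMem_empty p),
      by simp⟩⟩⟩
  obtain ⟨S, hSmem, hSmax'⟩ := Finset.exists_max_image _ Finset.card hne
  have hS : ValidSys G t S := (Finset.mem_filter.mp hSmem).2
  have hmax : ∀ S', ValidSys G t S' → S'.card ≤ S.card := fun S' h =>
    hSmax' S' (Finset.mem_filter.mpr ⟨Finset.mem_univ _, h⟩)
  set C : Finset (Fin n) := S.biUnion starFP with hCdef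
  set U : Finset (Fin n) := Finset.univ \ C with hUdef
  have hfpC : ∀ p ∈ S, starFP p ⊆ C := fun p hp => Finset.subset_biUnion_of_mem starFP hp
  have hUC_disj : ∀ {y : Fin n}, y ∈ U → y ∉ C := fun hy => (Finset.mem_sdiff.mp hy).2
  -- Lemma A : no uncovered vertex has t uncovered neighbours
  have lemA : ∀ x ∈ U, ¬ (t ≤ (G.neighborFinset x ∩ U).card) := by
    intro x hxU hle
    obtain ⟨L, hLsub, hLcard⟩ := Finset.exists_subset_card_eq hle
    have hLU : L ⊆ U := hLsub.trans Finset.inter_subset_right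
    have hLN : L ⊆ G.neighborFinset x := hLsub.trans Finset.inter_subset_left
    have hxL : x ∉ L := fun h => G.notMem_neighborFinset_self x (hLN h)
    have hfpU : starFP (x, L) ⊆ U := by
      intro y hy
      rcases Finset.mem_insert.mp hy with rfl | hy
      · exact hxU
      · exact hLU hy
    have hpS : (x, L) ∉ S := fun hp =>
      hUC_disj hxU (hfpC _ hp (Finset.mem_insert_self _ _))
    have hsymm : Symmetric (fun p q : Fin n × Finset (Fin n) =>
        Disjoint (starFP p) (starFP q)) := fun _ _ h => h.symm
    have hvalid : ValidSys G t (insert (x, L) S) := by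
      constructor
      · intro p hp
        rcases Finset.mem_insert.mp hp with rfl | hp
        · exact ⟨hLcard, hxL, fun y hy => (SimpleGraph.mem_neighborFinset _ _ _).mp (hLN hy)⟩
        · exact hS.1 p hp
      · rw [Finset.coe_insert]
        haveI : Std.Symm (fun p q : Fin n × Finset (Fin n) =>
            Disjoint (starFP p) (starFP q)) := ⟨fun a b h => hsymm h⟩
        refine (Set.pairwise_insert_of_symm).mpr ⟨hS.2, fun q hq _ => ?_⟩
        exact Finset.disjoint_left.mpr fun y hy hy2 => hUC_disj (hfpU hy) (hfpC q hq hy2)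
    have := hmax _ hvalid
    rw [Finset.card_insert_of_notMem hpS] at this
    omega
  -- Lemma B : no star has two vertices with ≥ 2t resp. ≥ t uncovered neighbours
  have lemB : 1 ≤ t → ∀ p ∈ S, ∀ v ∈ starFP p, ∀ w ∈ starFP p, v ≠ w →
      2*t ≤ (G.neighborFinset v ∩ U).card → t ≤ (G.neighborFinset w ∩ U).card → False := by
    intro ht p hp v hv w hw hvw h2t h1t
    obtain ⟨B, hBsub, hBcard⟩ := Finset.exists_subset_card_eq h1t
    have hA' : t ≤ ((G.neighborFinset v ∩ U) \ B).card := by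
      have := Finset.card_le_card_sdiff_add_card (s := G.neighborFinset v ∩ U) (t := B)
      omega
    obtain ⟨A, hAsub, hAcard⟩ := Finset.exists_subset_card_eq hA'
    have hAU : A ⊆ U := fun y hy =>
      (Finset.mem_inter.mp (Finset.mem_sdiff.mp (hAsub hy)).1).2
    have hAN : A ⊆ G.neighborFinset v := fun y hy =>
      (Finset.mem_inter.mp (Finset.mem_sdiff.mp (hAsub hy)).1).1
    have hAB : Disjoint A B := Finset.disjoint_left.mpr fun y hy =>
      (Finset.mem_sdiff.mp (hAsub hy)).2
    have hBU : B ⊆ U := fun y hy => (Finset.mem_inter.mp (hBsub hy)).2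
    have hBN : B ⊆ G.neighborFinset w := fun y hy => (Finset.mem_inter.mp (hBsub hy)).1
    have hvC : v ∈ C := hfpC p hp hv
    have hwC : w ∈ C := hfpC p hp hw
    have hvA : v ∉ A := fun h => hUC_disj (hAU h) hvC
    have hwB : w ∉ B := fun h => hUC_disj (hBU h) hwC
    have hdAB : Disjoint (starFP (v, A)) (starFP (w, B)) := by
      rw [Finset.disjoint_left]
      intro y hy hy2
      rcases Finset.mem_insert.mp hy with rfl | hy
      · rcases Finset.mem_insert.mp hy2 with h2 | h2
        · exact hvw h2
        · exact hUC_disj (hBU h2) hvC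
      · rcases Finset.mem_insert.mp hy2 with h2 | h2
        · exact hUC_disj (hAU hy) (h2 ▸ hwC)
        · exact (Finset.disjoint_left.mp hAB hy) h2
    have hdisj_old : ∀ (z : Fin n) (D : Finset (Fin n)), z ∈ starFP p → D ⊆ U →
        ∀ q ∈ S.erase p, Disjoint (starFP (z, D)) (starFP q) := by
      intro z D hz hD q hq
      obtain ⟨hqp, hqS⟩ := Finset.mem_erase.mp hq
      have hpq : Disjoint (starFP p) (starFP q) := hS.2 hp hqS fun h => hqp h.symm
      rw [Finset.disjoint_left]
      intro y hy hy2
      rcases Finset.mem_insert.mp hy with rfl | hy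
      · exact Finset.disjoint_left.mp hpq hz hy2
      · exact hUC_disj (hD hy) (hfpC q hqS hy2)
    have hnotS : ∀ (z : Fin n) (D : Finset (Fin n)), D ⊆ U → D.card = t → (z, D) ∉ S := by
      intro z D hD hcard hmem
      obtain ⟨y, hy⟩ := Finset.card_pos.mp (show 0 < D.card by omega)
      exact hUC_disj (hD hy) (hfpC _ hmem (Finset.mem_insert_of_mem hy))
    have hsymm : Symmetric (fun p q : Fin n × Finset (Fin n) =>
        Disjoint (starFP p) (starFP q)) := fun _ _ h => h.symm
    have hvalid : ValidSys G t (insert (v, A) (insert (w, B) (S.erase p))) := by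
      constructor
      · intro q hq
        rcases Finset.mem_insert.mp hq with rfl | hq
        · exact ⟨hAcard, hvA, fun y hy => (SimpleGraph.mem_neighborFinset _ _ _).mp (hAN hy)⟩
        rcases Finset.mem_insert.mp hq with rfl | hq
        · exact ⟨hBcard, hwB, fun y hy => (SimpleGraph.mem_neighborFinset _ _ _).mp (hBN hy)⟩
        · exact hS.1 q (Finset.mem_of_mem_erase hq)
      · rw [Finset.coe_insert, Finset.coe_insert]
        haveI : Std.Symm (fun p q : Fin n × Finset (Fin n) =>
            Disjoint (starFP p) (starFP q)) := ⟨fun a b h => hsymm h⟩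
        refine (Set.pairwise_insert_of_symm).mpr
          ⟨(Set.pairwise_insert_of_symm).mpr ⟨?_, fun q hq _ => ?_⟩,
            fun q hq _ => ?_⟩
        · exact hS.2.mono (Finset.coe_subset.mpr (Finset.erase_subset _ _))
        · exact hdisj_old w B hw hBU q hq
        · rcases Set.mem_insert_iff.mp hq with rfl | hq
          · exact hdAB
          · exact hdisj_old v A hv hAU q hq
    have hvAmem : (v, A) ∉ insert (w, B) (S.erase p) := by
      intro h
      rcases Finset.mem_insert.mp h with h | h
      · exact hvw (congrArg Prod.fst h)
      · exact hnotS v A hAU hAcard (Finset.mem_of_mem_erase h)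
    have hwBmem : (w, B) ∉ S.erase p := fun h =>
      hnotS w B hBU hBcard (Finset.mem_of_mem_erase h)
    have hc := hmax _ hvalid
    rw [Finset.card_insert_of_notMem hvAmem, Finset.card_insert_of_notMem hwBmem,
      Finset.card_erase_of_mem hp] at hc
    have hS1 : 1 ≤ S.card := Finset.card_pos.mpr ⟨p, hp⟩
    omega
  -- cardinalities
  have hfp_card : ∀ p ∈ S, (starFP p).card = t + 1 := fun p hp => by
    have h := hS.1 p hp
    rw [starFP, Finset.card_insert_of_notMem h.2.1, h.1]
  have hCcard : C.card = S.card * (t + 1) := by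
    rw [hCdef, Finset.card_biUnion (fun p hp q hq hne => hS.2 hp hq hne)]
    rw [Finset.sum_congr rfl hfp_card, Finset.sum_const, smul_eq_mul]
  have hUCn : U.card + C.card = n := by
    rw [hUdef, Finset.card_sdiff_add_card_eq_card (Finset.subset_univ C),
      Finset.card_univ, Fintype.card_fin]
  -- the key bound : |U| ≤ ε n
  have hU_small : (U.card : ℝ) ≤ ε * n := by
    rcases Nat.eq_zero_or_pos t with ht0 | ht
    · have hUe : U = ∅ := Finset.eq_empty_of_forall_notMem fun x hx =>
        lemA x hx (by omega)
      rw [hUe]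
      simp only [Finset.card_empty, Nat.cast_zero]
      positivity
    · by_contra hcon
      push_neg at hcon
      -- double counting
      have hdc : ∀ (A B2 : Finset (Fin n)),
          (∑ x ∈ A, (G.neighborFinset x ∩ B2).card)
            = ∑ y ∈ B2, (G.neighborFinset y ∩ A).card := by
        have key : ∀ (A B2 : Finset (Fin n)), (∑ x ∈ A, (G.neighborFinset x ∩ B2).card)
            = ∑ x ∈ A, ∑ y ∈ B2, if G.Adj x y then 1 else 0 := by
          intro A B2
          refine Finset.sum_congr rfl fun x _ => ?_
          rw [show G.neighborFinset x ∩ B2 = B2.filter (fun y => G.Adj x y) from by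
            ext y
            simp [SimpleGraph.mem_neighborFinset, and_comm]]
          exact Finset.card_filter _ _
        intro A B2
        rw [key, key, Finset.sum_comm]
        exact Finset.sum_congr rfl fun y _ => Finset.sum_congr rfl fun x _ =>
          if_congr (G.adj_comm _ _) rfl rfl
      -- per-star bound
      have h5 : ∀ p ∈ S,
          (∑ y ∈ starFP p, (G.neighborFinset y ∩ U).card) ≤ U.card + 2*t*(t+1) := by
        intro p hp
        by_cases hpiv : ∃ v ∈ starFP p, 2*t ≤ (G.neighborFinset v ∩ U).card
        · obtain ⟨v, hv, hv2⟩ := hpiv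
          have hrest : ∀ w ∈ (starFP p).erase v, (G.neighborFinset w ∩ U).card ≤ t := by
            intro w hw
            obtain ⟨hwv, hw'⟩ := Finset.mem_erase.mp hw
            by_contra hcon2
            exact lemB ht p hp v hv w hw' (fun h => hwv h.symm) hv2 (by omega)
          have hsum := Finset.sum_le_card_nsmul ((starFP p).erase v) _ t hrest
          have hec : ((starFP p).erase v).card = t := by
            rw [Finset.card_erase_of_mem hv, hfp_card p hp]
            omega
          rw [hec, smul_eq_mul] at hsum
          have hvU : (G.neighborFinset v ∩ U).card ≤ U.card :=
            Finset.card_le_card Finset.inter_subset_right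
          have hkey : (∑ x ∈ (starFP p).erase v, (G.neighborFinset x ∩ U).card)
              + (G.neighborFinset v ∩ U).card
              = ∑ y ∈ starFP p, (G.neighborFinset y ∩ U).card :=
            Finset.sum_erase_add (starFP p) (fun y => (G.neighborFinset y ∩ U).card) hv
          have htt : t * t ≤ 2*t*(t+1) := by nlinarith
          omega
        · push_neg at hpiv
          have hsum := Finset.sum_le_card_nsmul (starFP p) _ (2*t)
            fun v hv => le_of_lt (hpiv v hv)
          rw [hfp_card p hp, smul_eq_mul] at hsum
          have htt : (t+1) * (2*t) ≤ U.card + 2*t*(t+1) := by nlinarith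
          omega
      have hpd : (↑S : Set (Fin n × Finset (Fin n))).PairwiseDisjoint starFP :=
        fun a ha b hb hne => hS.2 ha hb hne
      have h6 : (∑ x ∈ U, (G.neighborFinset x ∩ C).card)
          ≤ S.card * (U.card + 2*t*(t+1)) := by
        rw [hdc U C, hCdef, Finset.sum_biUnion hpd]
        calc (∑ p ∈ S, ∑ y ∈ starFP p, (G.neighborFinset y ∩ U).card)
            ≤ S.card • (U.card + 2*t*(t+1)) :=
              Finset.sum_le_card_nsmul S _ _ fun p hp => h5 p hp
          _ = S.card * (U.card + 2*t*(t+1)) := by rw [smul_eq_mul]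
      -- degree lower bound
      have h1 : ∀ x ∈ U,
          (G.neighborFinset x).card + 1 ≤ (G.neighborFinset x ∩ C).card + t := by
        intro x hx
        have hsub : G.neighborFinset x
            ⊆ (G.neighborFinset x ∩ C) ∪ (G.neighborFinset x ∩ U) := by
          intro y hy
          by_cases hyC : y ∈ C
          · exact Finset.mem_union_left _ (Finset.mem_inter.mpr ⟨hy, hyC⟩)
          · exact Finset.mem_union_right _ (Finset.mem_inter.mpr
              ⟨hy, Finset.mem_sdiff.mpr ⟨Finset.mem_univ _, hyC⟩⟩)
        have hsplit := le_trans (Finset.card_le_card hsub) (Finset.card_union_le _ _)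
        have := lemA x hx
        omega
      have h2' : (U.card : ℝ) * ((n:ℝ)/((t:ℝ)+1) + 1)
          ≤ (↑(∑ x ∈ U, (G.neighborFinset x ∩ C).card) : ℝ) + (U.card:ℝ) * (t:ℝ) := by
        have hx : ∀ x ∈ U, ((n:ℝ)/((t:ℝ)+1) + 1)
            ≤ ((G.neighborFinset x ∩ C).card : ℝ) + (t:ℝ) := by
          intro x hxU
          have hset : G.neighborSet x = ↑(G.neighborFinset x) := by
            ext y
            simp [SimpleGraph.mem_neighborFinset]
          have hdegx : (n:ℝ)/((t:ℝ)+1) ≤ ((G.neighborFinset x).card : ℝ) := by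
            have := hdeg x
            rwa [hset, Set.ncard_coe_finset] at this
          have h1x : ((G.neighborFinset x).card : ℝ) + 1
              ≤ ((G.neighborFinset x ∩ C).card : ℝ) + (t:ℝ) := by
            exact_mod_cast h1 x hxU
          linarith
        calc (U.card : ℝ) * ((n:ℝ)/((t:ℝ)+1) + 1)
            = ∑ _x ∈ U, ((n:ℝ)/((t:ℝ)+1) + 1) := by
              rw [Finset.sum_const, nsmul_eq_mul]
          _ ≤ ∑ x ∈ U, (((G.neighborFinset x ∩ C).card : ℝ) + (t:ℝ)) :=
              Finset.sum_le_sum hx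
          _ = (↑(∑ x ∈ U, (G.neighborFinset x ∩ C).card) : ℝ) + (U.card:ℝ)*(t:ℝ) := by
              rw [Finset.sum_add_distrib, Finset.sum_const, nsmul_eq_mul]
              push_cast
              ring
      have h6' : (↑(∑ x ∈ U, (G.neighborFinset x ∩ C).card) : ℝ)
          ≤ (S.card:ℝ) * ((U.card:ℝ) + 2*(t:ℝ)*((t:ℝ)+1)) := by
        exact_mod_cast h6
      have hn' : (n:ℝ) = (U.card:ℝ) + (S.card:ℝ)*((t:ℝ)+1) := by
        have h := hUCn
        rw [hCcard] at h
        exact_mod_cast h.symm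
      have h1n : 1 ≤ n := by omega
      have hn0 : (0:ℝ) < n := by exact_mod_cast h1n
      have hceil : ((2*(t:ℝ)*((t:ℝ)+1)+1)/ε^2 : ℝ) ≤ (n:ℝ) := by
        refine le_trans (Nat.le_ceil _) ?_
        exact_mod_cast Nat.le_of_succ_le hn
      have hεn : 2*(t:ℝ)*((t:ℝ)+1) < ε^2 * n := by
        have h := (div_le_iff₀ (by positivity : (0:ℝ) < ε^2)).mp hceil
        nlinarith
      have h7 : ε*n*(ε*n) < (U.card:ℝ)*(U.card:ℝ) :=
        mul_self_lt_mul_self (by positivity) hcon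
      have e1 : (U.card:ℝ)*(n:ℝ) + (U.card:ℝ)*((t:ℝ)+1)
          ≤ ((t:ℝ)+1)*(↑(∑ x ∈ U, (G.neighborFinset x ∩ C).card) : ℝ)
            + (U.card:ℝ)*(t:ℝ)*((t:ℝ)+1) := by
        have h := mul_le_mul_of_nonneg_right h2' (le_of_lt hT1)
        calc (U.card:ℝ)*(n:ℝ) + (U.card:ℝ)*((t:ℝ)+1)
            = (U.card:ℝ) * ((n:ℝ)/((t:ℝ)+1) + 1) * ((t:ℝ)+1) := by
              field_simp
          _ ≤ ((↑(∑ x ∈ U, (G.neighborFinset x ∩ C).card) : ℝ) + (U.card:ℝ)*(t:ℝ))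
                * ((t:ℝ)+1) := h
          _ = ((t:ℝ)+1)*(↑(∑ x ∈ U, (G.neighborFinset x ∩ C).card) : ℝ)
                + (U.card:ℝ)*(t:ℝ)*((t:ℝ)+1) := by ring
      have e2 : ((t:ℝ)+1)*(↑(∑ x ∈ U, (G.neighborFinset x ∩ C).card) : ℝ)
          ≤ ((n:ℝ) - (U.card:ℝ)) * ((U.card:ℝ) + 2*(t:ℝ)*((t:ℝ)+1)) := by
        calc ((t:ℝ)+1)*(↑(∑ x ∈ U, (G.neighborFinset x ∩ C).card) : ℝ)
            ≤ ((t:ℝ)+1)*((S.card:ℝ) * ((U.card:ℝ) + 2*(t:ℝ)*((t:ℝ)+1))) :=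
              mul_le_mul_of_nonneg_left h6' (le_of_lt hT1)
          _ = ((n:ℝ) - (U.card:ℝ)) * ((U.card:ℝ) + 2*(t:ℝ)*((t:ℝ)+1)) := by
              rw [hn']
              ring
      have hu0 : (0:ℝ) ≤ (U.card:ℝ) := Nat.cast_nonneg _
      have ht0' : (0:ℝ) ≤ (t:ℝ) := Nat.cast_nonneg _
      nlinarith [e1, e2, h7, mul_lt_mul_of_pos_right hεn hn0,
        mul_nonneg hu0 ht0', mul_nonneg (mul_nonneg hu0 ht0') ht0', mul_nonneg hu0 hu0]
  -- build the tiling from the star system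
  have hprop := hS.1
  refine ⟨{f | ∃ p, ∃ hp : p ∈ S, f = mkEmb p.1 p.2 (hprop p hp).1 (hprop p hp).2.1},
    ⟨?_, ?_⟩, ?_⟩
  · rintro f ⟨p, hp, rfl⟩
    exact mkEmb_copy _ _ _ _ fun x hx => (hprop p hp).2.2 x hx
  · rintro f ⟨p, hp, rfl⟩ g ⟨q, hq, rfl⟩ hfg
    have hpq : p ≠ q := by
      rintro rfl
      exact hfg rfl
    rw [mkEmb_range, mkEmb_range]
    exact Finset.disjoint_coe.mpr (hS.2 hp hq hpq)
  · have hcover : tilingCover {f | ∃ p, ∃ hp : p ∈ S,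
        f = mkEmb p.1 p.2 (hprop p hp).1 (hprop p hp).2.1} = ↑C := by
      ext x
      simp only [tilingCover, Set.mem_iUnion, Set.mem_setOf_eq, exists_prop]
      constructor
      · rintro ⟨f, ⟨p, hp, rfl⟩, hx⟩
        rw [mkEmb_range] at hx
        exact Finset.mem_coe.mpr (hfpC p hp (by exact_mod_cast hx))
      · intro hx
        obtain ⟨p, hp, hxp⟩ := Finset.mem_biUnion.mp (Finset.mem_coe.mp hx)
        exact ⟨_, ⟨p, hp, rfl⟩, by rw [mkEmb_range]; exact_mod_cast hxp⟩
    rw [hcover]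
    have hdiff : (Set.univ : Set (Fin n)) \ ↑C = ↑U := by
      rw [hUdef, Finset.coe_sdiff, Finset.coe_univ]
    rw [hdiff, Set.ncard_coe_finset]
    exact hU_small
end

section
/- Let 0 < ε₁ ≪ ε₂ ≪ d < 1 and let N be sufficiently large. Let G' be a graph with disjoint vertex sets S, T satisfying (1−2ε₁)N ≤ |S| ≤ |T| ≤ (1+ε₁)N, such that (S, T)_{G'} is (3ε₁, d/6)-super-regular and |S| + |T| is even. Let G'' be any graph on S ∪ T such that every subset of T of size at least ε₂N contains an edge of G''. Then the graph on S ∪ T whose edge set is the union of the edges of G'[S,T] and of G'' contains a perfect matching. -/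
open MeasureTheory Filter

lemma pairingAux {V : Type} [Fintype V] (G'' : SimpleGraph V) (T : Set V) (b : ℕ)
    (hQ : ∀ Q ⊆ T, b ≤ Q.ncard → ∃ u ∈ Q, ∃ v ∈ Q, G''.Adj u v) :
    ∀ k : ℕ, b + 2 * k ≤ T.ncard →
      ∃ R ⊆ T, R.ncard = 2 * k ∧ ∃ ψ : V → V,
        ∀ v ∈ R, ψ v ∈ R ∧ ψ (ψ v) = v ∧ G''.Adj v (ψ v) := by
  classical
  intro k
  induction k with
  | zero => exact fun _ => ⟨∅, by simp, by simp, id, by simp⟩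
  | succ k ih =>
    intro hk
    obtain ⟨R, hRT, hRcard, ψ, hψ⟩ := ih (by omega)
    have hdiff : (T \ R).ncard = T.ncard - 2 * k := by
      rw [Set.ncard_diff hRT, hRcard]
    obtain ⟨u, hu, v, hv, huv⟩ := hQ (T \ R) Set.diff_subset (by omega)
    have hne : u ≠ v := G''.ne_of_adj huv
    have huR : u ∉ R := hu.2
    have hvR : v ∉ R := hv.2
    set ψ' : V → V := fun x => if x = u then v else if x = v then u else ψ x with hψ'def
    have eu : ψ' u = v := by simp [hψ'def]
    have ev : ψ' v = u := by simp [hψ'def, hne.symm]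
    have eR : ∀ x ∈ R, ψ' x = ψ x := by
      intro x hx
      have hxu : x ≠ u := fun h => huR (h ▸ hx)
      have hxv : x ≠ v := fun h => hvR (h ▸ hx)
      simp [hψ'def, hxu, hxv]
    refine ⟨insert u (insert v R), ?_, ?_, ψ', ?_⟩
    · intro x hx
      rcases hx with rfl | rfl | hx
      · exact hu.1
      · exact hv.1
      · exact hRT hx
    · rw [Set.ncard_insert_of_notMem (by simp [huR, hne]),
        Set.ncard_insert_of_notMem hvR, hRcard]
      ring
    · intro x hx
      rcases hx with rfl | rfl | hx
      · rw [eu, ev]; exact ⟨by simp, rfl, huv⟩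
      · rw [ev, eu]; exact ⟨by simp, rfl, huv.symm⟩
      · obtain ⟨h1, h2, h3⟩ := hψ x hx
        rw [eR x hx, eR _ h1]
        exact ⟨by simp [h1], h2, h3⟩

/-- Claim 5.7, the case `H = K₂`: if `(S, T)` is `(3ε₁, d/6)`-super-regular
with `(1-2ε₁)N ≤ |S| ≤ |T| ≤ (1+ε₁)N`, `|S| + |T|` even, and `G''` is any graph on `S ∪ T`
such that every subset of `T` of size at least `ε₂N` contains an edge of `G''`, then the
graph on `S ∪ T` whose edges are those of `G'[S,T]` together with those of `G''` has a
perfect matching. -/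
theorem statement15 (d : ℝ) (hd0 : 0 < d) (hd1 : d < 1) :
    ∃ e₂ : ℝ, 0 < e₂ ∧ ∀ ε₂ : ℝ, 0 < ε₂ → ε₂ ≤ e₂ →
    ∃ e₁ : ℝ, 0 < e₁ ∧ ∀ ε₁ : ℝ, 0 < ε₁ → ε₁ ≤ e₁ →
    ∃ N₀ : ℕ, ∀ N : ℕ, N₀ ≤ N →
    ∀ (V : Type) [Fintype V], ∀ (G' G'' : SimpleGraph V) (S T : Set V),
      Disjoint S T →
      (1 - 2 * ε₁) * N ≤ (S.ncard : ℝ) → (S.ncard : ℝ) ≤ (T.ncard : ℝ) →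
      (T.ncard : ℝ) ≤ (1 + ε₁) * N →
      IsSuperRegularPair G' S T (3 * ε₁) (d / 6) →
      2 ∣ (S.ncard + T.ncard) →
      (∀ Q ⊆ T, ε₂ * N ≤ (Q.ncard : ℝ) → ∃ u ∈ Q, ∃ v ∈ Q, G''.Adj u v) →
      ∃ M : ((SimpleGraph.fromRel fun u v =>
          G''.Adj u v ∨ (G'.Adj u v ∧ u ∈ S ∧ v ∈ T)).induce (S ∪ T)).Subgraph,
        M.IsPerfectMatching := by
  classical
  refine ⟨1/2, by norm_num, fun ε₂ hε₂0 hε₂ => ⟨d/100, by positivity, fun ε₁ hε₁0 hε₁ => ⟨1, fun N hN V _ G' G'' S T hdisj hS1 hST hT2 hreg heven hQ => ?_⟩⟩⟩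
  have hn1 : (1:ℝ) ≤ (N:ℝ) := by exact_mod_cast hN
  have hε₁d : ε₁ ≤ d/100 := hε₁
  have hd100 : d < 1 := hd1
  -- basic real facts
  set n : ℝ := (N:ℝ) with hn
  have hSn : ε₂ * n ≤ (S.ncard : ℝ) := by nlinarith
  have hSTnat : S.ncard ≤ T.ncard := by exact_mod_cast hST
  -- Step 1: pairing inside T

  have hpair : ∃ R ⊆ T, R.ncard = T.ncard - S.ncard ∧ ∃ ψ : V → V,
      ∀ v ∈ R, ψ v ∈ R ∧ ψ (ψ v) = v ∧ G''.Adj v (ψ v) := by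
    have hb : ⌈ε₂ * n⌉₊ ≤ S.ncard := Nat.ceil_le.mpr hSn
    have hQ' : ∀ Q ⊆ T, ⌈ε₂ * n⌉₊ ≤ Q.ncard → ∃ u ∈ Q, ∃ v ∈ Q, G''.Adj u v := by
      intro Q hQT hQc
      refine hQ Q hQT (le_trans (Nat.le_ceil _) ?_)
      exact_mod_cast hQc
    obtain ⟨k, hk⟩ : ∃ k, T.ncard - S.ncard = 2 * k := ⟨(T.ncard - S.ncard)/2, by omega⟩
    obtain ⟨R, hRT, hRc, hψ⟩ := pairingAux G'' T ⌈ε₂ * n⌉₊ hQ' k (by omega)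
    exact ⟨R, hRT, by omega, hψ⟩
  obtain ⟨R, hRT, hRcard, ψ, hψ⟩ := hpair
  set T' : Set V := T \ R with hT'def
  have hT'T : T' ⊆ T := Set.diff_subset
  have hT'card : T'.ncard = S.ncard := by
    rw [hT'def, Set.ncard_diff hRT, hRcard]
    omega
  -- Step 2: Hall's theorem gives an injection S → T' along G'-edges
  have hRle : R.ncard ≤ T.ncard := Set.ncard_le_ncard hRT (Set.toFinite T)
  have hRreal : (R.ncard : ℝ) = (T.ncard : ℝ) - (S.ncard : ℝ) := by
    rw [hRcard]
    push_cast [Nat.cast_sub hSTnat]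
    ring
  have hhall : ∃ f : S → V, Function.Injective f ∧
      ∀ x : S, f x ∈ G'.neighborSet ↑x ∩ T' := by
    set tf : S → Finset V := fun x => (Set.toFinite (G'.neighborSet ↑x ∩ T')).toFinset
      with htfdef
    have htf : ∀ (x : S) (y : V), y ∈ tf x ↔ y ∈ G'.neighborSet ↑x ∩ T' := by
      intro x y; rw [htfdef]; exact Set.Finite.mem_toFinset _
    have hmain : ∀ A : Finset S, A.card ≤ (A.biUnion tf).card := by
      intro A
      rcases Finset.eq_empty_or_nonempty A with rfl | ⟨x₀, hx₀⟩
      · simp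
      rcases le_or_gt (A.card : ℝ)
        (d / 6 * (T.ncard : ℝ) - ((T.ncard : ℝ) - (S.ncard : ℝ))) with hcase | hcase
      · -- small A : use min degree
        have hdeg := hreg.2.1 ↑x₀ x₀.2
        have hsplit : G'.neighborSet ↑x₀ ∩ T' = (G'.neighborSet ↑x₀ ∩ T) \ R := by
          rw [hT'def, Set.inter_diff_assoc]
        have hnc : (G'.neighborSet ↑x₀ ∩ T).ncard ≤ (G'.neighborSet ↑x₀ ∩ T').ncard + R.ncard := by
          calc (G'.neighborSet ↑x₀ ∩ T).ncard
              ≤ ((G'.neighborSet ↑x₀ ∩ T') ∪ R).ncard := by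
                apply Set.ncard_le_ncard _ (Set.Finite.union (Set.toFinite _) (Set.toFinite _))
                intro y hy
                by_cases hyR : y ∈ R
                · exact Or.inr hyR
                · exact Or.inl (hsplit ▸ ⟨hy, hyR⟩)
            _ ≤ _ := Set.ncard_union_le _ _
        have hcard1 : (A.card : ℝ) ≤ ((tf x₀).card : ℝ) := by
          have htfc : ((tf x₀).card : ℝ) = ((G'.neighborSet ↑x₀ ∩ T').ncard : ℝ) := by
            rw [htfdef]
            norm_cast
            exact (Set.ncard_eq_toFinset_card _ _).symm
          rw [htfc]
          have h2 : ((G'.neighborSet ↑x₀ ∩ T).ncard : ℝ)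
              ≤ ((G'.neighborSet ↑x₀ ∩ T').ncard : ℝ) + (R.ncard : ℝ) := by exact_mod_cast hnc
          rw [hRreal] at h2
          linarith
        have h3 : A.card ≤ (tf x₀).card := by exact_mod_cast hcard1
        exact le_trans h3 (Finset.card_le_card (Finset.subset_biUnion_of_mem tf hx₀))
      · -- large A
        set X : Set V := Subtype.val '' (↑A : Set S) with hXdef
        have hXS : X ⊆ S := by
          rintro _ ⟨x, -, rfl⟩
          exact x.2
        have hXcard : X.ncard = A.card := by
          rw [hXdef, Set.ncard_image_of_injective _ Subtype.val_injective,
            Set.ncard_coe_finset]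
        have hX3 : 3 * ε₁ * (S.ncard : ℝ) ≤ (X.ncard : ℝ) := by
          rw [hXcard]
          nlinarith [hε₁0.le, hd0.le, hST, hS1, hT2, hn1, hε₁, hd1]
        have hTcount : A.card ≤ S.ncard := by
          have h1 : A.card ≤ Fintype.card S := Finset.card_le_univ A
          rwa [← Nat.card_eq_fintype_card, Nat.card_coe_set_eq] at h1
        rcases le_or_gt (A.card : ℝ) ((S.ncard : ℝ) - 3 * ε₁ * (T.ncard : ℝ)) with h2a | h2b
        · -- medium A : regularity
          set Y : Set V := {y | y ∈ T' ∧ ∀ x ∈ X, ¬ G'.Adj x y} with hYdef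
          have hYT' : Y ⊆ T' := fun y hy => hy.1
          have hYT : Y ⊆ T := fun y hy => hT'T hy.1
          have hYlt : (Y.ncard : ℝ) < 3 * ε₁ * (T.ncard : ℝ) := by
            by_contra hc
            push_neg at hc
            have hd6 := hreg.1 X hXS Y hYT hX3 hc
            have hempty : {p : V × V | p.1 ∈ X ∧ p.2 ∈ Y ∧ G'.Adj p.1 p.2} = ∅ := by
              ext p
              simp only [Set.mem_setOf_eq, Set.mem_empty_iff_false, iff_false, not_and]
              intro h1 h2 h3
              exact h2.2 _ h1 h3
            rw [pairDensity, hempty] at hd6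
            simp only [Set.ncard_empty, Nat.cast_zero, zero_div] at hd6
            linarith
          have hsub : T' \ Y ⊆ ↑(A.biUnion tf) := by
            intro y hy
            have : ¬ (∀ x ∈ X, ¬ G'.Adj x y) := fun h => hy.2 ⟨hy.1, h⟩
            push_neg at this
            obtain ⟨x, hxX, hadj⟩ := this
            obtain ⟨x', hx'A, rfl⟩ := hxX
            apply Finset.mem_coe.mpr
            exact Finset.mem_biUnion.mpr ⟨x', hx'A, (htf x' y).mpr ⟨hadj, hy.1⟩⟩
          have hY'le : Y.ncard ≤ T'.ncard := Set.ncard_le_ncard hYT' (Set.toFinite T')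
          have hcD : (T' \ Y).ncard = T'.ncard - Y.ncard := Set.ncard_diff hYT'
          have hbig : ((T' \ Y).ncard : ℝ) ≤ ((A.biUnion tf).card : ℝ) := by
            have := Set.ncard_le_ncard hsub (Set.toFinite _)
            rw [Set.ncard_coe_finset] at this
            exact_mod_cast this
          have hfin : (A.card : ℝ) ≤ ((A.biUnion tf).card : ℝ) := by
            have hDr : ((T' \ Y).ncard : ℝ) = (T'.ncard : ℝ) - (Y.ncard : ℝ) := by
              rw [hcD]
              exact Nat.cast_sub hY'le
            rw [hDr] at hbig
            rw [hT'card] at hbig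
            linarith
          exact_mod_cast hfin
        · -- huge A : every vertex of T' is covered
          have hsub : T' ⊆ ↑(A.biUnion tf) := by
            intro y hyT'
            have hdeg := hreg.2.2 y (hT'T hyT')
            by_contra hyB
            have hno : ∀ x ∈ X, ¬ G'.Adj x y := by
              rintro _ ⟨x', hx'A, rfl⟩ hadj
              exact hyB (Finset.mem_coe.mpr
                (Finset.mem_biUnion.mpr ⟨x', hx'A, (htf x' y).mpr ⟨hadj, hyT'⟩⟩))
            have hsub2 : G'.neighborSet y ∩ S ⊆ S \ X := by
              rintro z ⟨hz1, hz2⟩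
              refine ⟨hz2, fun hzX => hno z hzX ?_⟩
              exact (G'.adj_symm hz1)
            have hc1 : (G'.neighborSet y ∩ S).ncard ≤ (S \ X).ncard :=
              Set.ncard_le_ncard hsub2 (Set.toFinite _)
            have hXle : X.ncard ≤ S.ncard := Set.ncard_le_ncard hXS (Set.toFinite S)
            have hc2 : (S \ X).ncard = S.ncard - X.ncard := Set.ncard_diff hXS
            have hc3 : ((G'.neighborSet y ∩ S).ncard : ℝ) ≤ (S.ncard : ℝ) - (A.card : ℝ) := by
              have : ((S \ X).ncard : ℝ) = (S.ncard : ℝ) - (X.ncard : ℝ) := by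
                rw [hc2]
                exact Nat.cast_sub hXle
              rw [← hXcard]
              rw [← this]
              exact_mod_cast hc1
            nlinarith [hε₁0.le, hd0.le, hST, hS1, hT2, hn1, hε₁, hd1]
          have hbig : T'.ncard ≤ (A.biUnion tf).card := by
            have := Set.ncard_le_ncard hsub (Set.toFinite _)
            rwa [Set.ncard_coe_finset] at this
          rw [hT'card] at hbig
          exact le_trans hTcount hbig
    obtain ⟨f, hfinj, hf⟩ := (Finset.all_card_le_biUnion_card_iff_exists_injective tf).mp hmain
    exact ⟨f, hfinj, fun x => (htf x (f x)).mp (hf x)⟩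
  obtain ⟨f, hfinj, hf⟩ := hhall
  -- upgrade to a bijection S ≃ T'
  have hbij : ∃ e : S ≃ T', ∀ x : S, (↑(e x) : V) = f x := by
    have hmem : ∀ x : S, f x ∈ T' := fun x => (hf x).2
    let F : S → T' := fun x => ⟨f x, hmem x⟩
    have hFinj : Function.Injective F := fun a b h => hfinj (congrArg Subtype.val h)
    have hcard : Nat.card S = Nat.card T' := by
      rw [Nat.card_coe_set_eq, Nat.card_coe_set_eq, hT'card]
    exact ⟨Equiv.ofBijective F ((Nat.bijective_iff_injective_and_card F).mpr ⟨hFinj, hcard⟩),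
      fun x => rfl⟩
  obtain ⟨e, he⟩ := hbij
  -- Step 3: assemble the involution and the matching
  set r : V → V → Prop := fun u v => G''.Adj u v ∨ (G'.Adj u v ∧ u ∈ S ∧ v ∈ T) with hrdef
  set φ : V → V := fun v =>
    if hv : v ∈ S then ↑(e ⟨v, hv⟩) else if hv' : v ∈ T' then ↑(e.symm ⟨v, hv'⟩) else ψ v
    with hφdef
  have hTnotS : ∀ v ∈ T, v ∉ S := fun v hv hvS => hdisj.ne_of_mem hvS hv rfl
  have φSeq : ∀ (v) (hv : v ∈ S), φ v = ↑(e ⟨v, hv⟩) := fun v hv => by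
    simp only [hφdef]; exact dif_pos hv
  have φT'eq : ∀ (v), v ∉ S → ∀ (hv' : v ∈ T'), φ v = ↑(e.symm ⟨v, hv'⟩) := fun v hv hv' => by
    simp only [hφdef]; rw [dif_neg hv]; exact dif_pos hv'
  have φReq : ∀ (v), v ∉ S → v ∉ T' → φ v = ψ v := fun v hv hv' => by
    simp only [hφdef]; rw [dif_neg hv]; exact dif_neg hv'
  have key : ∀ v ∈ S ∪ T, φ v ∈ S ∪ T ∧ φ (φ v) = v ∧ v ≠ φ v ∧ (r v (φ v) ∨ r (φ v) v) := by
    intro v hv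
    rcases hv with hvS | hvT
    · -- v ∈ S
      have hφv : φ v = f ⟨v, hvS⟩ := (φSeq v hvS).trans (he _)
      have hφT' : φ v ∈ T' := hφv ▸ (hf ⟨v, hvS⟩).2
      have hφT : φ v ∈ T := hT'T hφT'
      have hφnotS : φ v ∉ S := hTnotS _ hφT
      have hinv : φ (φ v) = v := by
        have h2 : φ (φ v) = ↑(e.symm ⟨φ v, hφT'⟩) := φT'eq (φ v) hφnotS hφT'
        have h3 : (⟨φ v, hφT'⟩ : T') = e ⟨v, hvS⟩ := Subtype.ext (φSeq v hvS)
        rw [h2, h3, Equiv.symm_apply_apply]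
      refine ⟨Or.inr hφT, hinv, fun h => hTnotS _ hφT (h ▸ hvS), Or.inl (Or.inr ⟨?_, hvS, hφT⟩)⟩
      rw [hφv]; exact (hf ⟨v, hvS⟩).1
    · -- v ∈ T
      have hvnotS : v ∉ S := hTnotS v hvT
      by_cases hvT' : v ∈ T'
      · -- v ∈ T'
        have hφv : φ v = ↑(e.symm ⟨v, hvT'⟩) := φT'eq v hvnotS hvT'
        have hφS : φ v ∈ S := hφv ▸ (e.symm ⟨v, hvT'⟩).2
        have hfx : f (e.symm ⟨v, hvT'⟩) = v := by
          rw [← he (e.symm ⟨v, hvT'⟩), Equiv.apply_symm_apply]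
        have hinv : φ (φ v) = v := by
          have h2 : φ (φ v) = ↑(e ⟨φ v, hφS⟩) := φSeq (φ v) hφS
          have h3 : (⟨φ v, hφS⟩ : S) = e.symm ⟨v, hvT'⟩ := Subtype.ext hφv
          rw [h2, h3, Equiv.apply_symm_apply]
        refine ⟨Or.inl hφS, hinv, fun h => hTnotS v hvT (h ▸ hφS),
          Or.inr (Or.inr ⟨?_, hφS, hvT⟩)⟩
        have := (hf (e.symm ⟨v, hvT'⟩)).1
        rw [hfx] at this
        rw [hφv]; exact this
      · -- v ∈ R
        have hvR : v ∈ R := by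
          by_contra h
          exact hvT' ⟨hvT, h⟩
        obtain ⟨h1, h2, h3⟩ := hψ v hvR
        have hψT : ψ v ∈ T := hRT h1
        have hψnotS : ψ v ∉ S := hTnotS _ hψT
        have hψnotT' : ψ v ∉ T' := fun h => h.2 h1
        have hφv : φ v = ψ v := φReq v hvnotS hvT'
        have hφψ : φ (ψ v) = ψ (ψ v) := φReq (ψ v) hψnotS hψnotT'
        refine ⟨Or.inr (hφv ▸ hψT), ?_, ?_, Or.inl (Or.inl (hφv ▸ h3))⟩
        · rw [hφv, hφψ, h2]
        · rw [hφv]; exact fun h => (G''.ne_of_adj h3) h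
  refine ⟨{ verts := Set.univ
            Adj := fun a b =>
              (((SimpleGraph.fromRel fun u v =>
                G''.Adj u v ∨ (G'.Adj u v ∧ u ∈ S ∧ v ∈ T)).induce (S ∪ T)).Adj a b) ∧
                φ ↑a = ↑b
            adj_sub := fun h => h.1
            edge_vert := fun _ => Set.mem_univ _
            symm := ?_ }, ?_, fun v => Set.mem_univ v⟩
  · refine ⟨?_⟩
    rintro a b ⟨h1, h2⟩
    refine ⟨h1.symm, ?_⟩
    rw [← h2, (key ↑a a.2).2.1]
  · -- matching
    rintro v -
    obtain ⟨hmem, hinv, hne, hr⟩ := key ↑v v.2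
    refine ⟨⟨φ ↑v, hmem⟩, ⟨?_, rfl⟩, ?_⟩
    · have hx : (SimpleGraph.fromRel fun u v =>
          G''.Adj u v ∨ (G'.Adj u v ∧ u ∈ S ∧ v ∈ T)).Adj ↑v (φ ↑v) := by
        rw [SimpleGraph.fromRel_adj]
        exact ⟨hne, hr⟩
      exact hx
    · rintro w ⟨-, hw⟩
      exact Subtype.ext hw.symm
end

section
/- Let H be a graph with |H| ≥ 3, let h := |H|−1 and let H' := H−x be the induced subgraph obtained by deleting a fixed vertex x ∈ V(H). Let 0 < 1/N ≪ ε₂ ≪ ε₃ ≪ ε₄ ≪ d₁ ≪ 1/|H|. Let G* be a graph with disjoint vertex classes S', T' with ε₄N ≤ |S'|, |T'| ≤ 2N such that: d_{G*}(X, Y) > d₁/2 for all X ⊆ S', Y ⊆ T' with |X| ≥ 2ε₂|S'| and |Y| ≥ 2ε₂|T'|; and every subset of S' of size at least 2ε₃N and every subset of T' of size at least 2ε₃N spans a copy of H' in G*. Then for all nonnegative integers a, b with ha + b ≤ |S'| − ε₄N and a + hb ≤ |T'| − ε₄N, the graph G*[S' ∪ T'] contains an H-tiling consisting of exactly a S-copies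 and exactly b T-copies of H. -/
open MeasureTheory Filter

lemma pigeon_snd {V : Type} [Fintype V] (G : SimpleGraph V) (X Y : Set V) (c : ℝ)
    (hX : (0:ℝ) < X.ncard) (hY : (0:ℝ) < Y.ncard) 
    (hd : c / X.ncard < pairDensity G X Y) :
    ∃ y ∈ Y, c ≤ ((G.neighborSet y ∩ X).ncard : ℝ) := by
  classical
  by_contra hcon
  push_neg at hcon
  set P : Set (V × V) := {p : V × V | p.1 ∈ X ∧ p.2 ∈ Y ∧ G.Adj p.1 p.2} with hP
  have hPfin : P.Finite := Set.toFinite P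
  have hYfin : Y.Finite := Set.toFinite Y
  have hYne : hYfin.toFinset.Nonempty := by
    rw [Finset.nonempty_iff_ne_empty]
    intro h
    rw [Set.Finite.toFinset_eq_empty.mp h] at hY
    simp at hY
  have hsum : hPfin.toFinset.card =
      ∑ y ∈ hYfin.toFinset, (hPfin.toFinset.filter (fun p => p.2 = y)).card := by
    apply Finset.card_eq_sum_card_fiberwise
    intro p hp
    simp only [Finset.mem_coe, Set.Finite.mem_toFinset] at hp ⊢
    exact hp.2.1
  have hfiber : ∀ y ∈ hYfin.toFinset,
      ((hPfin.toFinset.filter (fun p => p.2 = y)).card : ℝ) < c := by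
    intro y hy
    have hy' : y ∈ Y := hYfin.mem_toFinset.mp hy
    have hle : (hPfin.toFinset.filter (fun p => p.2 = y)).card
        ≤ (G.neighborSet y ∩ X).ncard := by
      rw [Set.ncard_eq_toFinset_card _ (Set.toFinite _)]
      apply Finset.card_le_card_of_injOn (fun p => p.1)
      · intro p hp
        simp only [Finset.mem_coe, Finset.mem_filter, Set.Finite.mem_toFinset] at hp
        simp only [Finset.mem_coe, Set.Finite.mem_toFinset, Set.mem_inter_iff, SimpleGraph.mem_neighborSet]
        exact ⟨(hp.2 ▸ hp.1.2.2).symm, hp.1.1⟩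
      · intro p hp q hq hpq
        simp only [Finset.coe_filter, Set.mem_setOf_eq] at hp hq
        exact Prod.ext hpq (hp.2.trans hq.2.symm)
    calc ((hPfin.toFinset.filter (fun p => p.2 = y)).card : ℝ)
        ≤ ((G.neighborSet y ∩ X).ncard : ℝ) := by exact_mod_cast hle
      _ < c := hcon y hy'
  have hPlt : (P.ncard : ℝ) < c * Y.ncard := by
    rw [Set.ncard_eq_toFinset_card _ hPfin, hsum]
    push_cast
    calc (∑ y ∈ hYfin.toFinset, ((hPfin.toFinset.filter (fun p => p.2 = y)).card : ℝ))
        < ∑ _y ∈ hYfin.toFinset, c := Finset.sum_lt_sum_of_nonempty hYne hfiber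
      _ = c * Y.ncard := by
          rw [Finset.sum_const, Set.ncard_eq_toFinset_card _ hYfin]
          simp [mul_comm]
  have : pairDensity G X Y < c / X.ncard := by
    rw [pairDensity, div_lt_div_iff₀ (by positivity) hX]
    nlinarith
  linarith

lemma pigeon_fst {V : Type} [Fintype V] (G : SimpleGraph V) (X Y : Set V) (c : ℝ)
    (hX : (0:ℝ) < X.ncard) (hY : (0:ℝ) < Y.ncard)
    (hd : c / Y.ncard < pairDensity G X Y) :
    ∃ u ∈ X, c ≤ ((G.neighborSet u ∩ Y).ncard : ℝ) := by
  classical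
  by_contra hcon
  push_neg at hcon
  set P : Set (V × V) := {p : V × V | p.1 ∈ X ∧ p.2 ∈ Y ∧ G.Adj p.1 p.2} with hP
  have hPfin : P.Finite := Set.toFinite P
  have hXfin : X.Finite := Set.toFinite X
  have hXne : hXfin.toFinset.Nonempty := by
    rw [Finset.nonempty_iff_ne_empty]
    intro h
    rw [Set.Finite.toFinset_eq_empty.mp h] at hX
    simp at hX
  have hsum : hPfin.toFinset.card =
      ∑ u ∈ hXfin.toFinset, (hPfin.toFinset.filter (fun p => p.1 = u)).card := by
    apply Finset.card_eq_sum_card_fiberwise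
    intro p hp
    simp only [Finset.mem_coe, Set.Finite.mem_toFinset] at hp ⊢
    exact hp.1
  have hfiber : ∀ u ∈ hXfin.toFinset,
      ((hPfin.toFinset.filter (fun p => p.1 = u)).card : ℝ) < c := by
    intro u hu
    have hu' : u ∈ X := hXfin.mem_toFinset.mp hu
    have hle : (hPfin.toFinset.filter (fun p => p.1 = u)).card
        ≤ (G.neighborSet u ∩ Y).ncard := by
      rw [Set.ncard_eq_toFinset_card _ (Set.toFinite _)]
      apply Finset.card_le_card_of_injOn (fun p => p.2)
      · intro p hp
        simp only [Finset.mem_coe, Finset.mem_filter, Set.Finite.mem_toFinset] at hp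
        simp only [Finset.mem_coe, Set.Finite.mem_toFinset, Set.mem_inter_iff, SimpleGraph.mem_neighborSet]
        exact ⟨hp.2 ▸ hp.1.2.2, hp.1.2.1⟩
      · intro p hp q hq hpq
        simp only [Finset.coe_filter, Set.mem_setOf_eq] at hp hq
        exact Prod.ext (hp.2.trans hq.2.symm) hpq
    calc ((hPfin.toFinset.filter (fun p => p.1 = u)).card : ℝ)
        ≤ ((G.neighborSet u ∩ Y).ncard : ℝ) := by exact_mod_cast hle
      _ < c := hcon u hu'
  have hPlt : (P.ncard : ℝ) < c * X.ncard := by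
    rw [Set.ncard_eq_toFinset_card _ hPfin, hsum]
    push_cast
    calc (∑ u ∈ hXfin.toFinset, ((hPfin.toFinset.filter (fun p => p.1 = u)).card : ℝ))
        < ∑ _u ∈ hXfin.toFinset, c := Finset.sum_lt_sum_of_nonempty hXne hfiber
      _ = c * X.ncard := by
          rw [Finset.sum_const, Set.ncard_eq_toFinset_card _ hXfin]
          simp [mul_comm]
  have : pairDensity G X Y < c / Y.ncard := by
    rw [pairDensity, div_lt_div_iff₀ (by positivity) hY]
    nlinarith
  linarith

/-- Build a copy of `H` from a copy of `H - x` whose vertices all lie in the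
neighborhood of `y₀`. -/

lemma buildCopy {V : Type} {hh : ℕ} (H : SimpleGraph (Fin hh)) (x : Fin hh)
    (Gstar : SimpleGraph V) (A B : Set V) (hdisj : Disjoint A B)
    (y₀ : V) (hy₀ : y₀ ∈ B)
    (g : ({y : Fin hh | y ≠ x} : Set (Fin hh)) ↪ V)
    (hg : IsCopyEmb (H.induce {y : Fin hh | y ≠ x}) Gstar g)
    (hrange : Set.range ⇑g ⊆ ↑(Gstar.neighborSet y₀) ∩ A) :
    ∃ f : Fin hh ↪ V, IsCopyEmb H Gstar f ∧ f x = y₀ ∧ (∀ u, u ≠ x → f u ∈ A) ∧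
      Set.range ⇑f ⊆ insert y₀ A := by
  classical
  have hgA : ∀ z : ({y : Fin hh | y ≠ x} : Set (Fin hh)), g z ∈ A := fun z =>
    (hrange (Set.mem_range_self z)).2
  have hgN : ∀ z : ({y : Fin hh | y ≠ x} : Set (Fin hh)), Gstar.Adj y₀ (g z) := fun z =>
    (hrange (Set.mem_range_self z)).1
  have hy₀A : y₀ ∉ A := fun h => (Set.disjoint_left.mp hdisj h) hy₀
  refine ⟨⟨fun u => if h : u = x then y₀ else g ⟨u, h⟩, ?_⟩, ?_, ?_, ?_, ?_⟩
  · refine @id (Function.Injective _) (fun u v huv => ?_)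
    change (if h : u = x then y₀ else g ⟨u, h⟩) = (if h : v = x then y₀ else g ⟨v, h⟩) at huv
    by_cases hu : u = x <;> by_cases hv : v = x
    · rw [hu, hv]
    · rw [dif_pos hu, dif_neg hv] at huv
      exact absurd huv (Ne.symm (ne_of_mem_of_not_mem (hgA _) hy₀A))
    · rw [dif_neg hu, dif_pos hv] at huv
      exact absurd huv (ne_of_mem_of_not_mem (hgA _) hy₀A)
    · rw [dif_neg hu, dif_neg hv] at huv
      exact congrArg Subtype.val (g.injective.eq_iff.mp huv)
  · intro u v huv
    simp only [Function.Embedding.coeFn_mk]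
    by_cases hu : u = x
    · have hv : v ≠ x := by
        intro h; rw [hu, h] at huv; exact H.loopless.irrefl x huv
      rw [dif_pos hu, dif_neg hv]
      exact hgN ⟨v, hv⟩
    · by_cases hv : v = x
      · rw [dif_neg hu, dif_pos hv]
        exact (hgN ⟨u, hu⟩).symm
      · rw [dif_neg hu, dif_neg hv]
        exact hg (by simpa [SimpleGraph.comap_adj] using huv :
          (H.induce {y : Fin hh | y ≠ x}).Adj ⟨u, hu⟩ ⟨v, hv⟩)
  · simp
  · intro u hu
    simp only [Function.Embedding.coeFn_mk, dif_neg hu]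
    exact hgA _
  · rintro v ⟨u, rfl⟩
    simp only [Function.Embedding.coeFn_mk]
    by_cases hu : u = x
    · rw [dif_pos hu]; exact Set.mem_insert _ _
    · rw [dif_neg hu]; exact Set.mem_insert_of_mem _ (hgA _)

lemma ncard_ne_fin {hh : ℕ} (x : Fin hh) : ({u : Fin hh | u ≠ x}).ncard = hh - 1 := by
  have : {u : Fin hh | u ≠ x} = Set.univ \ {x} := by ext u; simp
  rw [this, Set.ncard_diff (by simp), Set.ncard_univ, Set.ncard_singleton,
    Nat.card_eq_fintype_card, Fintype.card_fin]


set_option maxHeartbeats 1000000 in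
/-- Subclaim in the proof of Claim 5.8: in the dense bipartite-type
setting, for all `a, b` with `ha + b ≤ |S'| - ε₄N` and `a + hb ≤ |T'| - ε₄N`,
`G*[S' ∪ T']` contains an `H`-tiling consisting of exactly `a` `S`-copies and exactly
`b` `T`-copies of `H`. -/
theorem statement16 (hh : ℕ) (hhh : 3 ≤ hh) (H : SimpleGraph (Fin hh)) (x : Fin hh) :
    ∃ d₁' : ℝ, 0 < d₁' ∧ ∀ d₁ : ℝ, 0 < d₁ → d₁ ≤ d₁' →
    ∃ e₄ : ℝ, 0 < e₄ ∧ ∀ ε₄ : ℝ, 0 < ε₄ → ε₄ ≤ e₄ →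
    ∃ e₃ : ℝ, 0 < e₃ ∧ ∀ ε₃ : ℝ, 0 < ε₃ → ε₃ ≤ e₃ →
    ∃ e₂ : ℝ, 0 < e₂ ∧ ∀ ε₂ : ℝ, 0 < ε₂ → ε₂ ≤ e₂ →
    ∃ N₀ : ℕ, ∀ N : ℕ, N₀ ≤ N →
    ∀ (V : Type) [Fintype V], ∀ (Gstar : SimpleGraph V) (S' T' : Set V),
      Disjoint S' T' →
      ε₄ * N ≤ (S'.ncard : ℝ) → (S'.ncard : ℝ) ≤ 2 * N →
      ε₄ * N ≤ (T'.ncard : ℝ) → (T'.ncard : ℝ) ≤ 2 * N →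
      -- density between large subsets of S' and T'
      (∀ X ⊆ S', ∀ Y ⊆ T', 2 * ε₂ * S'.ncard ≤ (X.ncard : ℝ) →
        2 * ε₂ * T'.ncard ≤ (Y.ncard : ℝ) → d₁ / 2 < pairDensity Gstar X Y) →
      -- every large subset of S' (resp. T') spans a copy of H' = H - x
      (∀ W ⊆ S', 2 * ε₃ * N ≤ (W.ncard : ℝ) →
        ∃ g : ({y : Fin hh | y ≠ x} : Set (Fin hh)) ↪ V,
          IsCopyEmb (H.induce {y : Fin hh | y ≠ x}) Gstar g ∧ Set.range (⇑g) ⊆ W) →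
      (∀ W ⊆ T', 2 * ε₃ * N ≤ (W.ncard : ℝ) →
        ∃ g : ({y : Fin hh | y ≠ x} : Set (Fin hh)) ↪ V,
          IsCopyEmb (H.induce {y : Fin hh | y ≠ x}) Gstar g ∧ Set.range (⇑g) ⊆ W) →
      ∀ a b : ℕ,
        ((hh - 1 : ℕ) : ℝ) * a + b ≤ (S'.ncard : ℝ) - ε₄ * N →
        (a : ℝ) + ((hh - 1 : ℕ) : ℝ) * b ≤ (T'.ncard : ℝ) - ε₄ * N →
        ∃ FS FT : Finset (Fin hh ↪ V),
          -- FS consists of S-copies of H, FT of T-copies of H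
          (∀ f ∈ FS, IsCopyEmb H Gstar f ∧ f x ∈ T' ∧ ∀ u : Fin hh, u ≠ x → f u ∈ S') ∧
          (∀ f ∈ FT, IsCopyEmb H Gstar f ∧ f x ∈ S' ∧ ∀ u : Fin hh, u ≠ x → f u ∈ T') ∧
          -- the copies are pairwise vertex-disjoint (an H-tiling)
          (∀ f ∈ FS, ∀ g ∈ FS, f ≠ g → Disjoint (Set.range (⇑f)) (Set.range (⇑g))) ∧
          (∀ f ∈ FT, ∀ g ∈ FT, f ≠ g → Disjoint (Set.range (⇑f)) (Set.range (⇑g))) ∧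
          (∀ f ∈ FS, ∀ g ∈ FT, Disjoint (Set.range (⇑f)) (Set.range (⇑g))) ∧
          FS.card = a ∧ FT.card = b := by
  classical
  set m : ℕ := hh - 1 with hm
  have hm2 : 2 ≤ m := by omega
  have hmr : (2:ℝ) ≤ (m:ℝ) := by exact_mod_cast hm2
  refine ⟨1, one_pos, fun d₁ hd₁ _ => ⟨1, one_pos, fun ε₄ hε₄ _ =>
    ⟨d₁ * ε₄ / 8, by positivity, fun ε₃ hε₃ hε₃le =>
    ⟨ε₄ / 8, by positivity, fun ε₂ hε₂ hε₂le => ⟨1, fun N hN V _ Gstar S' T' hST hS1 hS2 hT1 hT2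
      hdens hcopyS hcopyT => ?_⟩⟩⟩⟩⟩
  have hNr : (1:ℝ) ≤ (N:ℝ) := by exact_mod_cast hN
  have hε₄N : (0:ℝ) < ε₄ * N := by nlinarith
  -- main induction
  have key : ∀ k (a b : ℕ), a + b = k →
      (m : ℝ) * a + b ≤ (S'.ncard : ℝ) - ε₄ * N →
      (a : ℝ) + (m : ℝ) * b ≤ (T'.ncard : ℝ) - ε₄ * N →
      ∃ FS FT : Finset (Fin hh ↪ V),
        (∀ f ∈ FS, IsCopyEmb H Gstar f ∧ f x ∈ T' ∧ ∀ u : Fin hh, u ≠ x → f u ∈ S') ∧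
        (∀ f ∈ FT, IsCopyEmb H Gstar f ∧ f x ∈ S' ∧ ∀ u : Fin hh, u ≠ x → f u ∈ T') ∧
        (∀ f ∈ FS ∪ FT, ∀ g ∈ FS ∪ FT, f ≠ g →
          Disjoint (Set.range (⇑f)) (Set.range (⇑g))) ∧
        FS.card = a ∧ FT.card = b ∧
        ((⋃ f ∈ (FS ∪ FT : Finset (Fin hh ↪ V)), Set.range (⇑f)) ∩ S').ncard ≤ m * a + b ∧
        ((⋃ f ∈ (FS ∪ FT : Finset (Fin hh ↪ V)), Set.range (⇑f)) ∩ T').ncard ≤ a + m * b := by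
    intro k
    induction k with
    | zero =>
      intro a b hab _ _
      obtain ⟨rfl, rfl⟩ : a = 0 ∧ b = 0 := by omega
      exact ⟨∅, ∅, by simp, by simp, by simp, by simp, by simp, by simp, by simp⟩
    | succ k ih =>
      intro a b hab h1 h2
      -- helper facts about free sets, given the old tiling
      rcases a with _ | a'
      · -- add a T-copy; b = k + 1
        have hb : b = k + 1 := by omega
        subst hb
        have h2' : ((0:ℕ) : ℝ) + (m:ℝ) * k ≤ (T'.ncard : ℝ) - ε₄ * N := by
          push_cast at h2 ⊢; nlinarith [hmr]
        obtain ⟨FS, FT, hFS, hFT, hdisj', hcard1, hcard2, hUS, hUT⟩ :=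
          ih 0 k (by omega) (by push_cast at h1 ⊢; linarith) h2'
        set U := (⋃ f ∈ (FS ∪ FT : Finset (Fin hh ↪ V)), Set.range (⇑f)) with hUdef
        have hXeq : ((S' \ U).ncard : ℝ) = (S'.ncard : ℝ) - ((U ∩ S').ncard : ℝ) := by
          rw [← Set.diff_self_inter, Set.ncard_diff Set.inter_subset_left,
            Nat.cast_sub (Set.ncard_le_ncard Set.inter_subset_left (Set.toFinite _)),
            Set.inter_comm]
        have hYeq : ((T' \ U).ncard : ℝ) = (T'.ncard : ℝ) - ((U ∩ T').ncard : ℝ) := by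
          rw [← Set.diff_self_inter, Set.ncard_diff Set.inter_subset_left,
            Nat.cast_sub (Set.ncard_le_ncard Set.inter_subset_left (Set.toFinite _)),
            Set.inter_comm]
        have hUSr : ((U ∩ S').ncard : ℝ) ≤ (0:ℝ) + k := by push_cast; exact_mod_cast hUS
        have hUTr : ((U ∩ T').ncard : ℝ) ≤ (m:ℝ) * k := by
          have h := hUT; rw [Nat.zero_add] at h; exact_mod_cast h
        have hX : ε₄ * N ≤ ((S' \ U).ncard : ℝ) := by
          rw [hXeq]; push_cast at h1; linarith [hUSr, hmr]
        have hY : ε₄ * N ≤ ((T' \ U).ncard : ℝ) := by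
          rw [hYeq]; push_cast at h2; linarith [hUTr, hmr]
        have hXpos : (0:ℝ) < ((S' \ U).ncard : ℝ) := lt_of_lt_of_le hε₄N hX
        have hYpos : (0:ℝ) < ((T' \ U).ncard : ℝ) := lt_of_lt_of_le hε₄N hY
        have hdens' : d₁ / 2 < pairDensity Gstar (S' \ U) (T' \ U) := by
          have hp1 : ε₂ * (S'.ncard : ℝ) ≤ ε₄ / 8 * (2 * N) :=
            mul_le_mul hε₂le hS2 (by positivity) (by positivity)
          have hp2 : ε₂ * (T'.ncard : ℝ) ≤ ε₄ / 8 * (2 * N) :=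
            mul_le_mul hε₂le hT2 (by positivity) (by positivity)
          apply hdens _ Set.diff_subset _ Set.diff_subset
          · linarith
          · linarith
        obtain ⟨u₀, hu₀, hu₀N⟩ := pigeon_fst Gstar (S' \ U) (T' \ U) (2 * ε₃ * N)
          hXpos hYpos (by
            rw [div_lt_iff₀ hYpos]
            calc 2 * ε₃ * N ≤ 2 * (d₁ * ε₄ / 8) * N := by
                  nlinarith [mul_le_mul_of_nonneg_right hε₃le (by positivity : (0:ℝ) ≤ (N:ℝ))]
              _ < d₁ / 2 * (ε₄ * N) := by nlinarith [mul_pos hd₁ hε₄N]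
              _ ≤ d₁ / 2 * ((T' \ U).ncard : ℝ) :=
                  mul_le_mul_of_nonneg_left hY (by positivity)
              _ < pairDensity Gstar (S' \ U) (T' \ U) * ((T' \ U).ncard : ℝ) :=
                  mul_lt_mul_of_pos_right hdens' hYpos)
        have hWsub : ↑(Gstar.neighborSet u₀) ∩ (T' \ U) ⊆ T' :=
          Set.inter_subset_right.trans Set.diff_subset
        obtain ⟨g, hgcopy, hgrange⟩ := hcopyT _ hWsub hu₀N
        obtain ⟨f, hfcopy, hfx, hfmem, hfsub⟩ := buildCopy H x Gstar (T' \ U) (S' \ U)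
          (Set.disjoint_of_subset Set.diff_subset Set.diff_subset hST.symm) u₀ hu₀ g hgcopy
          hgrange
        -- facts about f
        have hfree : ∀ v ∈ Set.range (⇑f), v ∉ U := by
          intro v hv
          rcases hfsub hv with rfl | hvX
          · exact hu₀.2
          · exact hvX.2
        have hold : ∀ f' ∈ FS ∪ FT, Set.range (⇑f') ⊆ U := by
          intro f' hf' v hv
          exact Set.mem_iUnion₂.mpr ⟨f', hf', hv⟩
        have hne : ∀ f' ∈ FS ∪ FT, f ≠ f' := by
          intro f' hf' h
          exact hfree (f' x) (h ▸ Set.mem_range_self x) (hold f' hf' (Set.mem_range_self x))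
        have hfFT : f ∉ FT := fun h => hne f (Finset.mem_union_right _ h) rfl
        have hdisj_new : ∀ f' ∈ FS ∪ FT, Disjoint (Set.range (⇑f)) (Set.range (⇑f')) := by
          intro f' hf'
          exact Set.disjoint_left.mpr fun v hv hv' => hfree v hv (hold f' hf' hv')
        have hunion : FS ∪ insert f FT = insert f (FS ∪ FT) := by
          rw [Finset.union_insert]
        have hcoverT : Set.range (⇑f) ∩ T' ⊆ ⇑f '' {u : Fin hh | u ≠ x} := by
          rintro v ⟨⟨u, rfl⟩, hvT⟩
          refine ⟨u, ?_, rfl⟩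
          intro h
          subst h
          rw [hfx] at hvT
          exact (Set.disjoint_left.mp hST hu₀.1) hvT
        have hcoverS : Set.range (⇑f) ∩ S' ⊆ {u₀} := by
          rintro v ⟨⟨u, rfl⟩, hvS⟩
          by_cases h : u = x
          · subst h; rw [hfx]; rfl
          · exact absurd hvS fun hvS => (Set.disjoint_left.mp hST hvS) (hfmem u h).1
        refine ⟨FS, insert f FT, hFS, ?_, ?_, hcard1, ?_, ?_, ?_⟩
        · intro f' hf'
          rcases Finset.mem_insert.mp hf' with rfl | hf'
          · exact ⟨hfcopy, by rw [hfx]; exact hu₀.1, fun u hu => (hfmem u hu).1⟩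
          · exact hFT f' hf'
        · rw [hunion]
          intro p hp q hq hpq
          rcases Finset.mem_insert.mp hp with rfl | hp'
          · rcases Finset.mem_insert.mp hq with rfl | hq'
            · exact absurd rfl hpq
            · exact hdisj_new q hq'
          · rcases Finset.mem_insert.mp hq with rfl | hq'
            · exact (hdisj_new p hp').symm
            · exact hdisj' p hp' q hq' hpq
        · rw [Finset.card_insert_of_notMem hfFT, hcard2]
        · rw [hunion, Finset.set_biUnion_insert, Set.union_inter_distrib_right]
          calc ((Set.range (⇑f) ∩ S') ∪ (U ∩ S')).ncard
              ≤ (Set.range (⇑f) ∩ S').ncard + (U ∩ S').ncard := Set.ncard_union_le _ _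
            _ ≤ 1 + (0 + k) := by
                have : (Set.range (⇑f) ∩ S').ncard ≤ 1 := by
                  calc (Set.range (⇑f) ∩ S').ncard ≤ ({u₀} : Set V).ncard :=
                      Set.ncard_le_ncard hcoverS (Set.toFinite _)
                    _ = 1 := Set.ncard_singleton _
                omega
            _ ≤ 0 + (k + 1) := by omega
        · rw [hunion, Finset.set_biUnion_insert, Set.union_inter_distrib_right]
          calc ((Set.range (⇑f) ∩ T') ∪ (U ∩ T')).ncard
              ≤ (Set.range (⇑f) ∩ T').ncard + (U ∩ T').ncard := Set.ncard_union_le _ _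
            _ ≤ m + m * k := by
                have : (Set.range (⇑f) ∩ T').ncard ≤ m := by
                  calc (Set.range (⇑f) ∩ T').ncard ≤ (⇑f '' {u : Fin hh | u ≠ x}).ncard :=
                      Set.ncard_le_ncard hcoverT (Set.toFinite _)
                    _ ≤ ({u : Fin hh | u ≠ x}).ncard := Set.ncard_image_le (Set.toFinite _)
                    _ = m := ncard_ne_fin x
                omega
            _ ≤ 0 + m * (k + 1) := by ring_nf; omega
      · -- add an S-copy
        have h1' : (m:ℝ) * a' + b ≤ (S'.ncard : ℝ) - ε₄ * N := by
          push_cast at h1 ⊢; nlinarith [hmr]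
        have h2' : (a' : ℝ) + (m:ℝ) * b ≤ (T'.ncard : ℝ) - ε₄ * N := by
          push_cast at h2 ⊢; linarith
        obtain ⟨FS, FT, hFS, hFT, hdisj', hcard1, hcard2, hUS, hUT⟩ :=
          ih a' b (by omega) h1' h2'
        set U := (⋃ f ∈ (FS ∪ FT : Finset (Fin hh ↪ V)), Set.range (⇑f)) with hUdef
        have hXeq : ((S' \ U).ncard : ℝ) = (S'.ncard : ℝ) - ((U ∩ S').ncard : ℝ) := by
          rw [← Set.diff_self_inter, Set.ncard_diff Set.inter_subset_left,
            Nat.cast_sub (Set.ncard_le_ncard Set.inter_subset_left (Set.toFinite _)),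
            Set.inter_comm]
        have hYeq : ((T' \ U).ncard : ℝ) = (T'.ncard : ℝ) - ((U ∩ T').ncard : ℝ) := by
          rw [← Set.diff_self_inter, Set.ncard_diff Set.inter_subset_left,
            Nat.cast_sub (Set.ncard_le_ncard Set.inter_subset_left (Set.toFinite _)),
            Set.inter_comm]
        have hUSr : ((U ∩ S').ncard : ℝ) ≤ (m:ℝ) * a' + b := by
          push_cast; exact_mod_cast hUS
        have hUTr : ((U ∩ T').ncard : ℝ) ≤ (a':ℝ) + (m:ℝ) * b := by
          push_cast; exact_mod_cast hUT
        have hX : ε₄ * N ≤ ((S' \ U).ncard : ℝ) := by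
          rw [hXeq]; push_cast at h1; linarith [hUSr, hmr]
        have hY : ε₄ * N ≤ ((T' \ U).ncard : ℝ) := by
          rw [hYeq]; push_cast at h2; linarith [hUTr, hmr]
        have hXpos : (0:ℝ) < ((S' \ U).ncard : ℝ) := lt_of_lt_of_le hε₄N hX
        have hYpos : (0:ℝ) < ((T' \ U).ncard : ℝ) := lt_of_lt_of_le hε₄N hY
        have hdens' : d₁ / 2 < pairDensity Gstar (S' \ U) (T' \ U) := by
          have hp1 : ε₂ * (S'.ncard : ℝ) ≤ ε₄ / 8 * (2 * N) :=
            mul_le_mul hε₂le hS2 (by positivity) (by positivity)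
          have hp2 : ε₂ * (T'.ncard : ℝ) ≤ ε₄ / 8 * (2 * N) :=
            mul_le_mul hε₂le hT2 (by positivity) (by positivity)
          apply hdens _ Set.diff_subset _ Set.diff_subset
          · linarith
          · linarith
        obtain ⟨y₀, hy₀, hy₀N⟩ := pigeon_snd Gstar (S' \ U) (T' \ U) (2 * ε₃ * N)
          hXpos hYpos (by
            rw [div_lt_iff₀ hXpos]
            calc 2 * ε₃ * N ≤ 2 * (d₁ * ε₄ / 8) * N := by
                  nlinarith [mul_le_mul_of_nonneg_right hε₃le (by positivity : (0:ℝ) ≤ (N:ℝ))]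
              _ < d₁ / 2 * (ε₄ * N) := by nlinarith [mul_pos hd₁ hε₄N]
              _ ≤ d₁ / 2 * ((S' \ U).ncard : ℝ) :=
                  mul_le_mul_of_nonneg_left hX (by positivity)
              _ < pairDensity Gstar (S' \ U) (T' \ U) * ((S' \ U).ncard : ℝ) :=
                  mul_lt_mul_of_pos_right hdens' hXpos)
        have hWsub : ↑(Gstar.neighborSet y₀) ∩ (S' \ U) ⊆ S' :=
          Set.inter_subset_right.trans Set.diff_subset
        obtain ⟨g, hgcopy, hgrange⟩ := hcopyS _ hWsub hy₀N
        obtain ⟨f, hfcopy, hfx, hfmem, hfsub⟩ := buildCopy H x Gstar (S' \ U) (T' \ U)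
          (Set.disjoint_of_subset Set.diff_subset Set.diff_subset hST) y₀ hy₀ g hgcopy
          hgrange
        have hfree : ∀ v ∈ Set.range (⇑f), v ∉ U := by
          intro v hv
          rcases hfsub hv with rfl | hvX
          · exact hy₀.2
          · exact hvX.2
        have hold : ∀ f' ∈ FS ∪ FT, Set.range (⇑f') ⊆ U := by
          intro f' hf' v hv
          exact Set.mem_iUnion₂.mpr ⟨f', hf', hv⟩
        have hne : ∀ f' ∈ FS ∪ FT, f ≠ f' := by
          intro f' hf' h
          exact hfree (f' x) (h ▸ Set.mem_range_self x) (hold f' hf' (Set.mem_range_self x))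
        have hfFS : f ∉ FS := fun h => hne f (Finset.mem_union_left _ h) rfl
        have hdisj_new : ∀ f' ∈ FS ∪ FT, Disjoint (Set.range (⇑f)) (Set.range (⇑f')) := by
          intro f' hf'
          exact Set.disjoint_left.mpr fun v hv hv' => hfree v hv (hold f' hf' hv')
        have hunion : insert f FS ∪ FT = insert f (FS ∪ FT) := by
          rw [Finset.insert_union]
        have hcoverS : Set.range (⇑f) ∩ S' ⊆ ⇑f '' {u : Fin hh | u ≠ x} := by
          rintro v ⟨⟨u, rfl⟩, hvS⟩
          refine ⟨u, ?_, rfl⟩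
          intro h
          subst h
          rw [hfx] at hvS
          exact (Set.disjoint_left.mp hST hvS) hy₀.1
        have hcoverT : Set.range (⇑f) ∩ T' ⊆ {y₀} := by
          rintro v ⟨⟨u, rfl⟩, hvT⟩
          by_cases h : u = x
          · subst h; rw [hfx]; rfl
          · exact absurd hvT fun hvT => (Set.disjoint_left.mp hST (hfmem u h).1) hvT
        refine ⟨insert f FS, FT, ?_, hFT, ?_, ?_, hcard2, ?_, ?_⟩
        · intro f' hf'
          rcases Finset.mem_insert.mp hf' with rfl | hf'
          · exact ⟨hfcopy, by rw [hfx]; exact hy₀.1, fun u hu => (hfmem u hu).1⟩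
          · exact hFS f' hf'
        · rw [hunion]
          intro p hp q hq hpq
          rcases Finset.mem_insert.mp hp with rfl | hp'
          · rcases Finset.mem_insert.mp hq with rfl | hq'
            · exact absurd rfl hpq
            · exact hdisj_new q hq'
          · rcases Finset.mem_insert.mp hq with rfl | hq'
            · exact (hdisj_new p hp').symm
            · exact hdisj' p hp' q hq' hpq
        · rw [Finset.card_insert_of_notMem hfFS, hcard1]
        · rw [hunion, Finset.set_biUnion_insert, Set.union_inter_distrib_right]
          calc ((Set.range (⇑f) ∩ S') ∪ (U ∩ S')).ncard
              ≤ (Set.range (⇑f) ∩ S').ncard + (U ∩ S').ncard := Set.ncard_union_le _ _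
            _ ≤ m + (m * a' + b) := by
                have : (Set.range (⇑f) ∩ S').ncard ≤ m := by
                  calc (Set.range (⇑f) ∩ S').ncard ≤ (⇑f '' {u : Fin hh | u ≠ x}).ncard :=
                      Set.ncard_le_ncard hcoverS (Set.toFinite _)
                    _ ≤ ({u : Fin hh | u ≠ x}).ncard := Set.ncard_image_le (Set.toFinite _)
                    _ = m := ncard_ne_fin x
                omega
            _ ≤ m * (a' + 1) + b := by ring_nf; omega
        · rw [hunion, Finset.set_biUnion_insert, Set.union_inter_distrib_right]
          calc ((Set.range (⇑f) ∩ T') ∪ (U ∩ T')).ncard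
              ≤ (Set.range (⇑f) ∩ T').ncard + (U ∩ T').ncard := Set.ncard_union_le _ _
            _ ≤ 1 + (a' + m * b) := by
                have : (Set.range (⇑f) ∩ T').ncard ≤ 1 := by
                  calc (Set.range (⇑f) ∩ T').ncard ≤ ({y₀} : Set V).ncard :=
                      Set.ncard_le_ncard hcoverT (Set.toFinite _)
                    _ = 1 := Set.ncard_singleton _
                omega
            _ ≤ (a' + 1) + m * b := by omega
  -- conclude
  intro a b h1 h2
  obtain ⟨FS, FT, hFS, hFT, hdisj', hcard1, hcard2, _, _⟩ := key (a + b) a b rfl h1 h2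
  have hcross : ∀ f ∈ FS, ∀ g ∈ FT, f ≠ g := by
    intro f hf g hg h
    subst h
    exact (Set.disjoint_left.mp hST (hFT f hg).2.1) (hFS f hf).2.1
  exact ⟨FS, FT, hFS, hFT,
    fun f hf g hg hfg => hdisj' f (Finset.mem_union_left _ hf) g (Finset.mem_union_left _ hg) hfg,
    fun f hf g hg hfg => hdisj' f (Finset.mem_union_right _ hf) g (Finset.mem_union_right _ hg) hfg,
    fun f hf g hg => hdisj' f (Finset.mem_union_left _ hf) g (Finset.mem_union_right _ hg)
      (hcross f hf g hg),
    hcard1, hcard2⟩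
end
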